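/- arXiv:1903.02394 — 3 statements merged into one kernel-verified Lean document; each statement's English description precedes it below -/
import Mathlib

section
/- For every ε > 0 there exists λ_ε > 1 such that for all x₁, x₂ ∈ ℝⁿ with w(x₂) > λ_ε·w(x₁), one has w(x₁ + x₂) < (1 + ε)·w(x₂). -/
open MeasureTheory Set ENNReal NNReal

noncomputable section

/-- Points of `ℝⁿ` with the Euclidean norm. -/
abbrev Pt (n : ℕ) := EuclideanSpace ℝ (Fin n)

/-- The action of an `n × n` real matrix on Euclidean space. -/
def mapp {n : ℕ} (A : Matrix (Fin n) (Fin n) ℝ) (x : Pt n) : Pt n :=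
  Matrix.toEuclideanLin A x

/-- A real matrix is expanding if all of its (complex) eigenvalues have modulus `> 1`. -/
def IsExpandingMatrix {n : ℕ} (A : Matrix (Fin n) (Fin n) ℝ) : Prop :=
  ∀ μ ∈ spectrum ℂ (A.map (fun a => (a : ℂ))), 1 < ‖μ‖

/-- The diameter of a set with respect to the pseudo norm `w`. -/
def pdiam {n : ℕ} (w : Pt n → ℝ) (E : Set (Pt n)) : ℝ≥0∞ :=
  ⨆ (x ∈ E) (y ∈ E), ENNReal.ofReal (w (x - y))

/-- The `δ`-approximation of the `s`-dimensional pseudo Hausdorff measure. -/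
def preHw {n : ℕ} (w : Pt n → ℝ) (s δ : ℝ) (E : Set (Pt n)) : ℝ≥0∞ :=
  ⨅ (U : ℕ → Set (Pt n)) (_ : E ⊆ ⋃ i, U i)
    (_ : ∀ i, pdiam w (U i) ≤ ENNReal.ofReal δ), ∑' i, pdiam w (U i) ^ s

/-- The `s`-dimensional pseudo Hausdorff measure w.r.t. the pseudo norm `w`. -/
def Hw {n : ℕ} (w : Pt n → ℝ) (s : ℝ) (E : Set (Pt n)) : ℝ≥0∞ :=
  ⨆ (δ : ℝ) (_ : 0 < δ), preHw w s δ E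

/-- Carathéodory measurability with respect to the outer measure `Hw w s`. -/
def HwMeasurable {n : ℕ} (w : Pt n → ℝ) (s : ℝ) (E : Set (Pt n)) : Prop :=
  ∀ T : Set (Pt n), Hw w s T = Hw w s (T ∩ E) + Hw w s (T \ E)

/-- A pseudo norm associated with the expanding matrix `A`. -/
structure IsPseudoNorm {n : ℕ} (A : Matrix (Fin n) (Fin n) ℝ) (w : Pt n → ℝ) : Prop where
  continuous : Continuous w
  nonneg : ∀ x, 0 ≤ w x
  neg : ∀ x, w (-x) = w x
  eq_zero_iff : ∀ x, w x = 0 ↔ x = 0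
  scaling : ∀ x, w (mapp A x) = |A.det| ^ ((1 : ℝ) / n) * w x
  quasi_triangle : ∃ β > (0 : ℝ), ∀ x y, w (x + y) ≤ β * max (w x) (w y)
  comparable : ∃ C > (0 : ℝ), ∃ α₁ > (0 : ℝ), ∃ α₂ > (0 : ℝ),
    (∀ x : Pt n, 1 < ‖x‖ → C⁻¹ * ‖x‖ ^ α₁ ≤ w x ∧ w x ≤ C * ‖x‖ ^ α₂) ∧
    (∀ x : Pt n, ‖x‖ ≤ 1 → C⁻¹ * ‖x‖ ^ α₂ ≤ w x ∧ w x ≤ C * ‖x‖ ^ α₁)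

/-- The map `f_d(x) = A⁻¹(x + d)` of the self-affine IFS. -/
def fIFS {n : ℕ} (A : Matrix (Fin n) (Fin n) ℝ) (d : Pt n) (x : Pt n) : Pt n :=
  mapp A⁻¹ (x + d)

/-- The open set condition for the IFS `{f_d}_{d ∈ D}`. -/
def OSC {n : ℕ} (A : Matrix (Fin n) (Fin n) ℝ) (D : Finset (Pt n)) : Prop :=
  ∃ V : Set (Pt n), V.Nonempty ∧ IsOpen V ∧ Bornology.IsBounded V ∧
    (⋃ d ∈ D, fIFS A d '' V) ⊆ V ∧
    ∀ d ∈ D, ∀ d' ∈ D, d ≠ d' → fIFS A d '' V ∩ fIFS A d' '' V = ∅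

/-- `K` is the self-affine set (attractor) for the pair `(A, D)`:
a nonempty compact set with `A K = ⋃_{d ∈ D} (K + d)`. -/
def IsSelfAffineSet {n : ℕ} (A : Matrix (Fin n) (Fin n) ℝ) (D : Finset (Pt n))
    (K : Set (Pt n)) : Prop :=
  K.Nonempty ∧ IsCompact K ∧ mapp A '' K = ⋃ d ∈ D, (fun x => x + d) '' K

/-- The set `𝒟_M` of `M`-fold expansions `Σ_{j<M} A^j d_j`. -/
def DsetM {n : ℕ} (A : Matrix (Fin n) (Fin n) ℝ) (D : Finset (Pt n)) (M : ℕ) :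
    Set (Pt n) :=
  {x | ∃ d : Fin M → Pt n, (∀ j, d j ∈ D) ∧ x = ∑ j : Fin M, mapp (A ^ (j : ℕ)) (d j)}

/-- The set `𝒟_∞ = ⋃_{M ≥ 1} 𝒟_M`. -/
def DsetInf {n : ℕ} (A : Matrix (Fin n) (Fin n) ℝ) (D : Finset (Pt n)) : Set (Pt n) :=
  ⋃ (M : ℕ) (_ : 1 ≤ M), DsetM A D M

/-- A set is uniformly discrete if distinct points are uniformly separated. -/
def UniformlyDiscrete {n : ℕ} (S : Set (Pt n)) : Prop :=
  ∃ δ > (0 : ℝ), ∀ x ∈ S, ∀ y ∈ S, x ≠ y → δ < ‖x - y‖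

/-- `σ` is the invariant (self-affine) probability measure of the IFS `{f_d}_{d ∈ D}`. -/
def IsInvariantMeasure {n : ℕ} (A : Matrix (Fin n) (Fin n) ℝ) (D : Finset (Pt n))
    (σ : Measure (Pt n)) : Prop :=
  IsProbabilityMeasure σ ∧
  ∀ f : Pt n → ℝ, Continuous f → HasCompactSupport f →
    ∫ x, f x ∂σ = ((D.card : ℝ))⁻¹ * ∑ d ∈ D, ∫ x, f (fIFS A d x) ∂σ

/-- The measure `μ_M = Σ_{d_0,…,d_{M−1} ∈ 𝒟} δ_{d_0 + A d_1 + ⋯ + A^{M−1} d_{M−1}}`. -/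
def muM {n : ℕ} (A : Matrix (Fin n) (Fin n) ℝ) (D : Finset (Pt n)) (M : ℕ) :
    Measure (Pt n) :=
  ∑ d ∈ (Finset.univ : Finset (Fin M → {x : Pt n // x ∈ D})),
    Measure.dirac (∑ j : Fin M, mapp (A ^ (j : ℕ)) ((d j : Pt n)))

/-- Convolution of two Borel measures on `ℝⁿ`. -/
def mconv {n : ℕ} (μ ν : Measure (Pt n)) : Measure (Pt n) :=
  Measure.map (fun p : Pt n × Pt n => p.1 + p.2) (μ.prod ν)

/-- The upper `s`-density `ℰ⁺_{w,s}(ν)` of a Borel measure `ν` w.r.t. the pseudo norm `w`. -/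
def upperDensity {n : ℕ} (w : Pt n → ℝ) (s : ℝ) (ν : Measure (Pt n)) : ℝ≥0∞ :=
  ⨅ (r : ℝ) (_ : 0 < r),
    ⨆ (U : Set (Pt n)) (_ : IsCompact U) (_ : Convex ℝ U)
      (_ : ENNReal.ofReal r ≤ pdiam w U), ν U / pdiam w U ^ s

/-- The upper convex `s`-density `D^s_{w,c}(E, x)` of `E` at `x` w.r.t. `w`. -/
def upperConvexDensity {n : ℕ} (w : Pt n → ℝ) (s : ℝ) (E : Set (Pt n)) (x : Pt n) :
    ℝ≥0∞ :=
  ⨅ (r : ℝ) (_ : 0 < r),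
    ⨆ (U : Set (Pt n)) (_ : Convex ℝ U) (_ : x ∈ U) (_ : 0 < pdiam w U)
      (_ : pdiam w U ≤ ENNReal.ofReal r), Hw w s (E ∩ U) / pdiam w U ^ s

/-- The pseudo Hausdorff dimension `dim_H^w E = inf {s ≥ 0 : ℋ^s_w(E) = 0}`. -/
def dimHw {n : ℕ} (w : Pt n → ℝ) (E : Set (Pt n)) : ℝ≥0∞ :=
  ⨅ (t : ℝ≥0) (_ : Hw w (t : ℝ) E = 0), (t : ℝ≥0∞)

/-- `𝒱` is a Vitali class for `E` w.r.t. `w`. -/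
def VitaliClass {n : ℕ} (w : Pt n → ℝ) (𝒱 : Set (Set (Pt n))) (E : Set (Pt n)) : Prop :=
  ∀ x ∈ E, ∀ δ : ℝ, 0 < δ →
    ∃ U ∈ 𝒱, x ∈ U ∧ 0 < pdiam w U ∧ pdiam w U ≤ ENNReal.ofReal δ

/-- The composite map `f_𝐢 = f_{i₁} ∘ ⋯ ∘ f_{i_m}` associated with a word of digits. -/
def fWord {n : ℕ} (A : Matrix (Fin n) (Fin n) ℝ) (i : List (Pt n)) (x : Pt n) : Pt n :=
  i.foldr (fun d y => fIFS A d y) x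

open Polynomial in
theorem aux_det_gt_one {n : ℕ} (hn : 0 < n) (A : Matrix (Fin n) (Fin n) ℝ)
    (hA : IsExpandingMatrix A) : 1 < |A.det| := by
  set B := A.map (fun a => (a : ℂ)) with hBdef
  have hB : B.det = (A.det : ℂ) := by
    have : B = (algebraMap ℝ ℂ).mapMatrix A := rfl
    rw [this, ← RingHom.map_det]; rfl
  have hspec : ∀ μ ∈ B.charpoly.roots, μ ∈ spectrum ℂ B := by
    intro μ hμ
    have hroot : B.charpoly.IsRoot μ := isRoot_of_mem_roots hμ
    have heval : Polynomial.eval μ B.charpoly = ((Matrix.scalar (Fin n)) μ - B).det := by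
      rw [Matrix.charpoly, _root_.eval_det, Matrix.matPolyEquiv_charmatrix]
      simp
    rw [spectrum.mem_iff]
    intro hunit
    rw [Matrix.isUnit_iff_isUnit_det] at hunit
    have h2 : (algebraMap ℂ (Matrix (Fin n) (Fin n) ℂ)) μ - B = (Matrix.scalar (Fin n)) μ - B := by
      congr 1
    rw [h2, ← heval, hroot.eq_zero] at hunit
    exact hunit.ne_zero rfl |>.elim
  have hprod : B.det = B.charpoly.roots.prod := Matrix.det_eq_prod_roots_charpoly B
  have habs : |A.det| = (B.charpoly.roots.map (norm : ℂ → ℝ)).prod := by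
    have : ‖B.det‖ = (B.charpoly.roots.map (norm : ℂ → ℝ)).prod := by
      rw [hprod]
      exact map_multiset_prod (normHom : ℂ →*₀ ℝ) _
    rw [hB] at this
    simpa using this
  have hcard : B.charpoly.roots.card = n := by
    have h1 : B.charpoly.natDegree = n := by
      simpa using B.charpoly_natDegree_eq_dim
    exact (splits_iff_card_roots.mp (IsAlgClosed.splits B.charpoly)).trans h1
  have hne : B.charpoly.roots ≠ 0 := by
    intro h; rw [h] at hcard; simp at hcard; omega
  obtain ⟨μ₀, hμ₀⟩ := Multiset.exists_mem_of_ne_zero hne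
  rw [habs]
  obtain ⟨s, hs⟩ := Multiset.exists_cons_of_mem (Multiset.mem_map_of_mem (norm : ℂ → ℝ) hμ₀)
  rw [hs, Multiset.prod_cons]
  have h1 : 1 < (norm : ℂ → ℝ) μ₀ := hA μ₀ (hspec μ₀ hμ₀)
  have hsle : (1:ℝ) ≤ s.prod := by
    apply Multiset.one_le_prod
    intro x hx
    have hx' : x ∈ B.charpoly.roots.map (norm : ℂ → ℝ) := by
      rw [hs]; exact Multiset.mem_cons_of_mem hx
    obtain ⟨μ, hμ, rfl⟩ := Multiset.mem_map.mp hx'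
    exact le_of_lt (hA μ (hspec μ hμ))
  nlinarith [norm_nonneg μ₀]

/-- Lemma 2.4: for every `ε > 0` there is `λ_ε > 1` such that
`w(x₂) > λ_ε w(x₁)` implies `w(x₁ + x₂) < (1 + ε) w(x₂)`. -/
theorem stmt4 {n : ℕ} (hn : 0 < n) (A : Matrix (Fin n) (Fin n) ℝ)
    (hA : IsExpandingMatrix A)
    (hAnorm : ∀ x : Pt n, ‖x‖ ≤ ‖mapp A x‖)
    (hAeq : ∀ x : Pt n, ‖x‖ = ‖mapp A x‖ → x = 0)
    (w : Pt n → ℝ) (hw : IsPseudoNorm A w)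
    (ε : ℝ) (hε : 0 < ε) :
    ∃ lam : ℝ, 1 < lam ∧
      ∀ x₁ x₂ : Pt n, lam * w x₁ < w x₂ → w (x₁ + x₂) < (1 + ε) * w x₂ := by
  obtain ⟨C, hC, α₁, hα₁, α₂, hα₂, hbig, hsmall⟩ := hw.comparable
  have hq : 1 < |A.det| := aux_det_gt_one hn A hA
  set c : ℝ := |A.det| ^ ((1 : ℝ) / n) with hcdef
  have hc : 1 < c := by
    rw [hcdef]
    rw [Real.one_lt_rpow_iff_of_pos (by linarith)]
    left
    constructor
    · exact hq
    · positivity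
  have hc0 : (0:ℝ) < c := lt_trans one_pos hc
  have hdet : IsUnit A.det := isUnit_iff_ne_zero.mpr (by
    intro h; rw [h] at hq; simp at hq; linarith)
  -- the linear equivalence given by A
  have hAB : (Matrix.toEuclideanLin A).comp (Matrix.toEuclideanLin A⁻¹) = LinearMap.id := by
    apply LinearMap.ext
    intro x
    simp only [LinearMap.comp_apply, LinearMap.id_apply, Matrix.toEuclideanLin_apply,
      Equiv.apply_symm_apply, Matrix.mulVec_mulVec, Matrix.mul_nonsing_inv A hdet,
      Matrix.one_mulVec, Equiv.symm_apply_apply]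
  have hBA : (Matrix.toEuclideanLin A⁻¹).comp (Matrix.toEuclideanLin A) = LinearMap.id := by
    apply LinearMap.ext
    intro x
    simp only [LinearMap.comp_apply, LinearMap.id_apply, Matrix.toEuclideanLin_apply,
      Equiv.apply_symm_apply, Matrix.mulVec_mulVec, Matrix.nonsing_inv_mul A hdet,
      Matrix.one_mulVec, Equiv.symm_apply_apply]
  set e : Pt n ≃ₗ[ℝ] Pt n :=
    LinearEquiv.ofLinear (Matrix.toEuclideanLin A) (Matrix.toEuclideanLin A⁻¹) hAB hBA with hedef
  have hwe : ∀ x, w (e x) = c * w x := fun x => hw.scaling x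
  have hwsymm : ∀ x, w (e.symm x) = c⁻¹ * w x := by
    intro x
    have h1 : w (e (e.symm x)) = c * w (e.symm x) := hwe _
    rw [e.apply_symm_apply] at h1
    field_simp
    linarith [h1]
  have hzpow : ∀ k : ℤ, ∀ x, w ((e ^ k) x) = c ^ k * w x := by
    intro k
    induction k using Int.induction_on with
    | zero => intro x; simp
    | succ k ih =>
      intro x
      have h1 : (e ^ ((k:ℤ) + 1)) x = (e ^ (k:ℤ)) (e x) := by rw [zpow_add_one]; rfl
      rw [h1, ih, hwe, zpow_add_one₀ (ne_of_gt hc0)]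
      ring
    | pred k ih =>
      intro x
      have h1 : (e ^ (-(k:ℤ) - 1)) x = (e ^ (-(k:ℤ))) (e.symm x) := by
        rw [sub_eq_add_neg, zpow_add, zpow_neg_one]; rfl
      rw [h1, ih, hwsymm, zpow_sub_one₀ (ne_of_gt hc0)]
      ring
  have hwpos : ∀ x : Pt n, x ≠ 0 → 0 < w x := by
    intro x hx
    rcases lt_or_eq_of_le (hw.nonneg x) with h | h
    · exact h
    · exact absurd ((hw.eq_zero_iff x).mp h.symm) hx
  -- small w implies small norm
  have hsmallnorm : ∀ η : ℝ, 0 < η → ∃ τ : ℝ, 0 < τ ∧ ∀ u : Pt n, w u ≤ τ → ‖u‖ < η := by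
    intro η hη
    set η' := min η 1 with hη'def
    have hη'0 : 0 < η' := lt_min hη one_pos
    have hη'1 : η' ≤ 1 := min_le_right _ _
    set m := min (C⁻¹ * η' ^ α₂) C⁻¹ with hmdef
    have hm0 : 0 < m := lt_min (by positivity) (by positivity)
    refine ⟨m / 2, by positivity, ?_⟩
    intro u hu
    by_contra hcon
    push_neg at hcon
    have hη'u : η' ≤ ‖u‖ := le_trans (min_le_left _ _) hcon
    rcases le_or_gt ‖u‖ 1 with h1 | h1
    · have h2 := (hsmall u h1).1
      have h3 : η' ^ α₂ ≤ ‖u‖ ^ α₂ :=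
        Real.rpow_le_rpow (le_of_lt hη'0) hη'u (le_of_lt hα₂)
      have h4 : C⁻¹ * η' ^ α₂ ≤ w u := le_trans (by nlinarith [inv_pos.mpr hC]) h2
      have h5 : m ≤ C⁻¹ * η' ^ α₂ := min_le_left _ _
      linarith
    · have h2 := (hbig u h1).1
      have h3 : (1:ℝ) ≤ ‖u‖ ^ α₁ := by
        calc (1:ℝ) = 1 ^ α₁ := (Real.one_rpow _).symm
        _ ≤ ‖u‖ ^ α₁ := Real.rpow_le_rpow zero_le_one (le_of_lt h1) (le_of_lt hα₁)
      have h4 : C⁻¹ ≤ w u := le_trans (by nlinarith [inv_pos.mpr hC]) h2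
      have h5 : m ≤ C⁻¹ := min_le_right _ _
      linarith
  -- the compact annulus
  set S : Set (Pt n) := {v | 1 ≤ w v ∧ w v ≤ c} with hSdef
  have hSclosed : IsClosed S := by
    have h1 : IsClosed {v : Pt n | 1 ≤ w v} := isClosed_le continuous_const hw.continuous
    have h2 : IsClosed {v : Pt n | w v ≤ c} := isClosed_le hw.continuous continuous_const
    exact h1.inter h2
  have hSbounded : Bornology.IsBounded S := by
    apply (Metric.isBounded_closedBall (x := (0 : Pt n)) (r := max 1 ((C * c) ^ (1/α₁)))).subset
    intro v hv
    rw [Metric.mem_closedBall, dist_zero_right]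
    rcases le_or_gt ‖v‖ 1 with h1 | h1
    · exact le_trans h1 (le_max_left _ _)
    · have h2 := (hbig v h1).1
      have h3 : ‖v‖ ^ α₁ ≤ C * c := by
        have := le_trans h2 hv.2
        rw [inv_mul_le_iff₀ hC] at this
        exact this
      have h4 : ‖v‖ ≤ (C * c) ^ (1/α₁) := by
        have h5 := Real.rpow_le_rpow (by positivity) h3 (by positivity : (0:ℝ) ≤ 1/α₁)
        rwa [← Real.rpow_mul (norm_nonneg v), mul_one_div_cancel (ne_of_gt hα₁),
          Real.rpow_one] at h5
      exact le_trans h4 (le_max_right _ _)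
  have hScompact : IsCompact S := Metric.isCompact_of_isClosed_isBounded hSclosed hSbounded
  -- tube lemma via thickening
  set K : Set (Pt n × Pt n) := (fun v => ((0 : Pt n), v)) '' S with hKdef
  have hKcompact : IsCompact K := hScompact.image (continuous_const.prodMk continuous_id)
  set U : Set (Pt n × Pt n) := {p | w (p.1 + p.2) < (1 + ε) * w p.2} with hUdef
  have hUopen : IsOpen U := by
    apply isOpen_lt
    · exact hw.continuous.comp (continuous_fst.add continuous_snd)
    · exact continuous_const.mul (hw.continuous.comp continuous_snd)
  have hKU : K ⊆ U := by
    rintro p ⟨v, hv, rfl⟩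
    simp only [hUdef, Set.mem_setOf_eq, zero_add]
    nlinarith [hv.1]
  obtain ⟨δ, hδ, hsub⟩ := hKcompact.exists_thickening_subset_open hUopen hKU
  have hmain : ∀ u v : Pt n, v ∈ S → ‖u‖ < δ → w (u + v) < (1 + ε) * w v := by
    intro u v hv hu
    have hmem : (u, v) ∈ Metric.thickening δ K := by
      rw [Metric.mem_thickening_iff]
      refine ⟨((0 : Pt n), v), ⟨v, hv, rfl⟩, ?_⟩
      rw [Prod.dist_eq]
      simp only [dist_self, dist_zero_right]
      rw [max_eq_left (norm_nonneg u)]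
      exact hu
    exact hsub hmem
  obtain ⟨τ, hτ, hτle⟩ := hsmallnorm δ hδ
  -- define lam
  refine ⟨max 2 (c / τ), lt_of_lt_of_le one_lt_two (le_max_left _ _), ?_⟩
  intro x₁ x₂ h
  set lam := max 2 (c / τ) with hlamdef
  have hlam2 : (2:ℝ) ≤ lam := le_max_left _ _
  have hlamct : c / τ ≤ lam := le_max_right _ _
  have hlam0 : (0:ℝ) < lam := by linarith
  have hx2 : 0 < w x₂ := by
    have := mul_nonneg (le_of_lt hlam0) (hw.nonneg x₁)
    linarith
  obtain ⟨k, hk1, hk2⟩ := exists_mem_Ico_zpow hx2 hc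
  set p := c ^ k with hpdef
  have hp : 0 < p := zpow_pos hc0 k
  have hznegk : c ^ (-k) = p⁻¹ := by rw [zpow_neg]
  set z₁ := (e ^ (-k)) x₁ with hz₁
  set z₂ := (e ^ (-k)) x₂ with hz₂
  have hwz₁ : w z₁ = p⁻¹ * w x₁ := by rw [hz₁, hzpow, hznegk]
  have hwz₂ : w z₂ = p⁻¹ * w x₂ := by rw [hz₂, hzpow, hznegk]
  have hck1 : c ^ (k + 1) = p * c := by rw [zpow_add_one₀ (ne_of_gt hc0)]
  have hz₂S : z₂ ∈ S := by
    constructor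
    · rw [hwz₂]
      rw [le_inv_mul_iff₀ hp, mul_one]
      exact hk1
    · rw [hwz₂]
      rw [inv_mul_le_iff₀ hp]
      have : w x₂ < p * c := by rw [← hck1]; exact hk2
      linarith
  have hz₁τ : w z₁ ≤ τ := by
    rw [hwz₁]
    have h1 : lam * w x₁ < p * c := by
      calc lam * w x₁ < w x₂ := h
      _ < c ^ (k+1) := hk2
      _ = p * c := hck1
    have h2 : c ≤ lam * τ := by
      rw [div_le_iff₀ hτ] at hlamct
      exact hlamct
    have h3 : 0 ≤ w x₁ := hw.nonneg x₁
    rw [inv_mul_le_iff₀ hp]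
    have h4 : lam * w x₁ < lam * (p * τ) := by
      calc lam * w x₁ < p * c := h1
      _ ≤ p * (lam * τ) := mul_le_mul_of_nonneg_left h2 (le_of_lt hp)
      _ = lam * (p * τ) := by ring
    exact le_of_lt (lt_of_mul_lt_mul_left h4 (by linarith : (0:ℝ) ≤ lam))
  have hnormz₁ : ‖z₁‖ < δ := hτle z₁ hz₁τ
  have hfin : w (z₁ + z₂) < (1 + ε) * w z₂ := hmain z₁ z₂ hz₂S hnormz₁
  have hadd : z₁ + z₂ = (e ^ (-k)) (x₁ + x₂) := (map_add _ _ _).symm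
  rw [hadd, hzpow, hznegk, hwz₂] at hfin
  have hinv : 0 < p⁻¹ := inv_pos.mpr hp
  calc w (x₁ + x₂) = p * (p⁻¹ * w (x₁ + x₂)) := by field_simp
  _ < p * ((1 + ε) * (p⁻¹ * w x₂)) := by
      apply mul_lt_mul_of_pos_left _ hp
      exact hfin
  _ = (1 + ε) * w x₂ := by field_simp
end
end

section
/- Suppose 0 < ℋ^s_w(K) < ∞, where s = n·ln(#𝒟)/ln q. Then σ(E) = ℋ^s_w(E ∩ K)/ℋ^s_w(K) for every Borel set E ⊆ ℝⁿ; that is, σ is the restriction of ℋ^s_w to K normalized to total mass 1. -/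
open MeasureTheory Set ENNReal NNReal

noncomputable section

set_option maxHeartbeats 1000000

section Basics
variable {n : ℕ} {w : Pt n → ℝ} {s : ℝ}

lemma pdiam_le_iff {E : Set (Pt n)} {c : ℝ≥0∞} :
    pdiam w E ≤ c ↔ ∀ x ∈ E, ∀ y ∈ E, ENNReal.ofReal (w (x - y)) ≤ c := by
  simp [pdiam, iSup_le_iff]

lemma pdiam_empty : pdiam w (∅ : Set (Pt n)) = 0 := by simp [pdiam]

lemma pdiam_mono {E F : Set (Pt n)} (h : E ⊆ F) : pdiam w E ≤ pdiam w F :=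
  pdiam_le_iff.2 fun x hx y hy =>
    le_iSup₂_of_le x (h hx) (le_iSup₂_of_le y (h hy) le_rfl)

lemma preHw_le_of_cover {E : Set (Pt n)} {δ : ℝ} (U : ℕ → Set (Pt n))
    (hc : E ⊆ ⋃ i, U i) (hd : ∀ i, pdiam w (U i) ≤ ENNReal.ofReal δ) :
    preHw w s δ E ≤ ∑' i, pdiam w (U i) ^ s :=
  iInf_le_of_le U <| iInf_le_of_le hc <| iInf_le _ hd

lemma preHw_mono {E F : Set (Pt n)} {δ : ℝ} (h : E ⊆ F) :
    preHw w s δ E ≤ preHw w s δ F :=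
  le_iInf fun U => le_iInf fun hc => le_iInf fun hd =>
    preHw_le_of_cover U (h.trans hc) hd

lemma preHw_anti {E : Set (Pt n)} {δ₁ δ₂ : ℝ} (h : δ₁ ≤ δ₂) :
    preHw w s δ₂ E ≤ preHw w s δ₁ E :=
  le_iInf fun U => le_iInf fun hc => le_iInf fun hd =>
    preHw_le_of_cover U hc fun i => (hd i).trans (ENNReal.ofReal_le_ofReal h)

lemma le_Hw {E : Set (Pt n)} {δ : ℝ} (hδ : 0 < δ) : preHw w s δ E ≤ Hw w s E :=
  le_iSup₂_of_le δ hδ le_rfl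

lemma Hw_mono {E F : Set (Pt n)} (h : E ⊆ F) : Hw w s E ≤ Hw w s F :=
  iSup₂_le fun δ hδ => (preHw_mono h).trans (le_Hw hδ)

lemma preHw_empty {δ : ℝ} (hs : 0 < s) : preHw w s δ (∅ : Set (Pt n)) = 0 := by
  refine le_antisymm ?_ zero_le
  refine (preHw_le_of_cover (fun _ => (∅ : Set (Pt n))) (by simp) ?_).trans ?_
  · intro i; simp [pdiam_empty]
  · simp [pdiam_empty, ENNReal.zero_rpow_of_pos hs]

lemma Hw_empty (hs : 0 < s) : Hw w s (∅ : Set (Pt n)) = 0 := by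
  simp [Hw, preHw_empty hs]

lemma Hw_eq_iSup_nat {E : Set (Pt n)} {δ₀ : ℝ} (hδ₀ : 0 < δ₀) :
    Hw w s E = ⨆ k : ℕ, preHw w s (δ₀ / (k + 1)) E := by
  refine le_antisymm (iSup₂_le fun δ hδ => ?_) (iSup_le fun k => le_Hw (by positivity))
  obtain ⟨k, hk⟩ := exists_nat_gt (δ₀ / δ)
  refine le_trans (preHw_anti ?_) (le_iSup (fun k : ℕ => preHw w s (δ₀ / (k + 1)) E) k)
  rw [div_le_iff₀ (by positivity)]
  rw [div_lt_iff₀ hδ] at hk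
  nlinarith

lemma preHw_iUnion_le {δ : ℝ} (E : ℕ → Set (Pt n)) :
    preHw w s δ (⋃ k, E k) ≤ ∑' k, preHw w s δ (E k) := by
  refine ENNReal.le_of_forall_pos_le_add fun ε hε hlt => ?_
  obtain ⟨ε', hε'pos, hε'sum⟩ :=
    ENNReal.exists_pos_sum_of_countable (ε := (ε : ℝ≥0∞)) (by exact_mod_cast hε.ne') ℕ
  have hfin : ∀ k, preHw w s δ (E k) ≠ ⊤ := fun k =>
    ne_top_of_le_ne_top hlt.ne (ENNReal.le_tsum k)
  have key : ∀ k : ℕ, ∃ U : ℕ → Set (Pt n), (E k ⊆ ⋃ i, U i) ∧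
      (∀ i, pdiam w (U i) ≤ ENNReal.ofReal δ) ∧
      ∑' i, pdiam w (U i) ^ s ≤ preHw w s δ (E k) + ε' k := by
    intro k
    have hlt2 : preHw w s δ (E k) < preHw w s δ (E k) + ε' k :=
      ENNReal.lt_add_right (hfin k) (by exact_mod_cast (hε'pos k).ne')
    conv_lhs at hlt2 => rw [preHw]
    simp only [iInf_lt_iff] at hlt2
    obtain ⟨U, hc, hd, hU⟩ := hlt2
    exact ⟨U, hc, hd, hU.le⟩
  choose U hUc hUd hUs using key
  let e : ℕ ≃ ℕ × ℕ := (Denumerable.eqv (ℕ × ℕ)).symm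
  refine le_trans (preHw_le_of_cover (fun i => U (e i).1 (e i).2) ?_ ?_) ?_
  · intro x hx
    simp only [mem_iUnion] at hx ⊢
    obtain ⟨k, hk⟩ := hx
    obtain ⟨j, hj⟩ := mem_iUnion.1 (hUc k hk)
    exact ⟨e.symm (k, j), by simpa using hj⟩
  · intro i; exact hUd _ _
  · calc ∑' i, pdiam w (U (e i).1 (e i).2) ^ s
        = ∑' p : ℕ × ℕ, pdiam w (U p.1 p.2) ^ s := e.tsum_eq (fun p : ℕ × ℕ => pdiam w (U p.1 p.2) ^ s)
      _ = ∑' k, ∑' j, pdiam w (U k j) ^ s := ENNReal.tsum_prod (f := fun k j => pdiam w (U k j) ^ s)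
      _ ≤ ∑' k, (preHw w s δ (E k) + ε' k) := ENNReal.tsum_le_tsum hUs
      _ = (∑' k, preHw w s δ (E k)) + ∑' k, (ε' k : ℝ≥0∞) := ENNReal.tsum_add
      _ ≤ (∑' k, preHw w s δ (E k)) + ε := by gcongr

lemma Hw_iUnion_le (E : ℕ → Set (Pt n)) :
    Hw w s (⋃ k, E k) ≤ ∑' k, Hw w s (E k) :=
  iSup₂_le fun δ hδ => (preHw_iUnion_le E).trans
    (ENNReal.tsum_le_tsum fun k => le_Hw hδ)

lemma Hw_top_of_nonpos (hs : s ≤ 0) (E : Set (Pt n)) : Hw w s E = ⊤ := by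
  have h1 : preHw w s 1 E = ⊤ := by
    refine le_antisymm le_top (le_iInf fun U => le_iInf fun hc => le_iInf fun hd => ?_)
    have hterm : ∀ i, (1 : ℝ≥0∞) ≤ pdiam w (U i) ^ s := by
      intro i
      rcases eq_or_ne (pdiam w (U i)) 0 with h0 | h0
      · rcases eq_or_lt_of_le hs with h | h
        · subst h; simp [h0]
        · simp [h0, ENNReal.zero_rpow_of_neg h]
      · have hle1 : pdiam w (U i) ≤ 1 := by simpa using hd i
        calc (1 : ℝ≥0∞) = pdiam w (U i) ^ (0 : ℝ) := by rw [ENNReal.rpow_zero]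
          _ ≤ pdiam w (U i) ^ s := ENNReal.rpow_le_rpow_of_exponent_ge hle1 hs
    calc (⊤ : ℝ≥0∞) = ∑' _ : ℕ, (1 : ℝ≥0∞) :=
          (ENNReal.tsum_const_eq_top_of_ne_zero one_ne_zero).symm
      _ ≤ ∑' i, pdiam w (U i) ^ s := ENNReal.tsum_le_tsum hterm
  exact le_antisymm le_top (h1 ▸ le_Hw one_pos)

end Basics

section Metric
variable {n : ℕ} {w : Pt n → ℝ} {s : ℝ}

lemma preHw_union_le {δ : ℝ} (hs : 0 < s) (S T : Set (Pt n)) :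
    preHw w s δ (S ∪ T) ≤ preHw w s δ S + preHw w s δ T := by
  classical
  have h := preHw_iUnion_le (w := w) (s := s) (δ := δ)
    (fun k => if k = 0 then S else if k = 1 then T else ∅)
  refine le_trans (le_trans ?_ h) ?_
  · apply preHw_mono; intro x hx
    rcases hx with h | h
    · exact mem_iUnion.2 ⟨0, by simpa using h⟩
    · exact mem_iUnion.2 ⟨1, by simpa using h⟩
  · rw [tsum_eq_sum (s := ({0, 1} : Finset ℕ))
      (by intro b hb; simp only [Finset.mem_insert, Finset.mem_singleton] at hb
          push_neg at hb
          simp [hb.1, hb.2, preHw_empty hs])]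
    simp

lemma preHw_add_le_union (hs : 0 < s) {δ ρ : ℝ} (hδρ : δ ≤ ρ) {S T : Set (Pt n)}
    (hsep : ∀ V : Set (Pt n), pdiam w V ≤ ENNReal.ofReal ρ →
      ¬((V ∩ S).Nonempty ∧ (V ∩ T).Nonempty)) :
    preHw w s δ S + preHw w s δ T ≤ preHw w s δ (S ∪ T) := by
  classical
  refine le_iInf fun U => le_iInf fun hc => le_iInf fun hd => ?_
  set VS : ℕ → Set (Pt n) := fun i => if (U i ∩ S).Nonempty then U i else ∅ with hVS
  set VT : ℕ → Set (Pt n) := fun i => if (U i ∩ T).Nonempty then U i else ∅ with hVT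
  have hVSle : ∀ i, VS i ⊆ U i := by
    intro i; rw [hVS]; dsimp only; split <;> simp
  have hVTle : ∀ i, VT i ⊆ U i := by
    intro i; rw [hVT]; dsimp only; split <;> simp
  have h1 : preHw w s δ S ≤ ∑' i, pdiam w (VS i) ^ s := by
    refine preHw_le_of_cover VS ?_ (fun i => (pdiam_mono (hVSle i)).trans (hd i))
    intro x hx
    obtain ⟨i, hi⟩ := mem_iUnion.1 (hc (Or.inl hx))
    refine mem_iUnion.2 ⟨i, ?_⟩
    rw [hVS]; dsimp only; rw [if_pos ⟨x, hi, hx⟩]; exact hi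
  have h2 : preHw w s δ T ≤ ∑' i, pdiam w (VT i) ^ s := by
    refine preHw_le_of_cover VT ?_ (fun i => (pdiam_mono (hVTle i)).trans (hd i))
    intro x hx
    obtain ⟨i, hi⟩ := mem_iUnion.1 (hc (Or.inr hx))
    refine mem_iUnion.2 ⟨i, ?_⟩
    rw [hVT]; dsimp only; rw [if_pos ⟨x, hi, hx⟩]; exact hi
  calc preHw w s δ S + preHw w s δ T
      ≤ (∑' i, pdiam w (VS i) ^ s) + ∑' i, pdiam w (VT i) ^ s := add_le_add h1 h2
    _ = ∑' i, (pdiam w (VS i) ^ s + pdiam w (VT i) ^ s) := ENNReal.tsum_add.symm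
    _ ≤ ∑' i, pdiam w (U i) ^ s := by
        refine ENNReal.tsum_le_tsum fun i => ?_
        by_cases hS : (U i ∩ S).Nonempty <;> by_cases hT : (U i ∩ T).Nonempty
        · exact absurd ⟨hS, hT⟩ (hsep (U i)
            ((hd i).trans (ENNReal.ofReal_le_ofReal hδρ)))
        · simp [hVS, hVT, hS, hT, pdiam_empty, ENNReal.zero_rpow_of_pos hs]
        · simp [hVS, hVT, hS, hT, pdiam_empty, ENNReal.zero_rpow_of_pos hs]
        · simp [hVS, hVT, hS, hT, pdiam_empty, ENNReal.zero_rpow_of_pos hs]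

lemma Hw_union_separated (hs : 0 < s) {ρ : ℝ} (hρ : 0 < ρ) {S T : Set (Pt n)}
    (hsep : ∀ V : Set (Pt n), pdiam w V ≤ ENNReal.ofReal ρ →
      ¬((V ∩ S).Nonempty ∧ (V ∩ T).Nonempty)) :
    Hw w s (S ∪ T) = Hw w s S + Hw w s T := by
  have hmono : ∀ E : Set (Pt n), Monotone fun k : ℕ => preHw w s (ρ / (k + 1)) E := by
    intro E k l hkl
    refine preHw_anti (div_le_div_of_nonneg_left hρ.le (by positivity) (by exact_mod_cast by omega))
  rw [Hw_eq_iSup_nat hρ (E := S ∪ T), Hw_eq_iSup_nat hρ (E := S), Hw_eq_iSup_nat hρ (E := T),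
    ENNReal.iSup_add_iSup_of_monotone (hmono S) (hmono T)]
  refine iSup_congr fun k => ?_
  have hδ : ρ / ((k : ℝ) + 1) ≤ ρ := by
    rw [div_le_iff₀ (by positivity)]; nlinarith
  exact le_antisymm (preHw_union_le hs S T) (preHw_add_le_union hs hδ hsep)

lemma exists_measure_Hw (hs : 0 < s)
    (hW : ∀ ε : ℝ, 0 < ε → ∃ δ > 0, ∀ z : Pt n, w z ≤ δ → ‖z‖ ≤ ε) :
    ∃ μ : Measure (Pt n), ∀ E : Set (Pt n), MeasurableSet E → μ E = Hw w s E := by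
  let m : OuterMeasure (Pt n) :=
    ⟨Hw w s, Hw_empty hs, fun h => Hw_mono h, fun E _ => Hw_iUnion_le E⟩
  have hmetric : m.IsMetric := by
    intro S T hST
    obtain ⟨r, hr0, hr⟩ := hST
    set r' : ℝ := (min r 1).toReal with hr'def
    have hne : min r 1 ≠ 0 := by
      simp only [ne_eq, min_eq_iff]
      rintro (⟨h, -⟩ | ⟨h, -⟩) <;> simp_all
    have hr'pos : 0 < r' := ENNReal.toReal_pos hne (by
      exact ne_top_of_le_ne_top one_ne_top (min_le_right _ _))
    have hdist : ∀ x ∈ S, ∀ y ∈ T, r' ≤ ‖x - y‖ := by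
      intro x hx y hy
      have h1 : min r 1 ≤ edist x y := le_trans (min_le_left _ _) (hr x hx y hy)
      have h2 : edist x y = ENNReal.ofReal (dist x y) := edist_dist x y
      have := ENNReal.toReal_mono (by rw [h2]; exact ofReal_ne_top) h1
      rw [h2, ENNReal.toReal_ofReal dist_nonneg] at this
      rwa [dist_eq_norm] at this
    obtain ⟨ρ, hρ0, hρ⟩ := hW (r' / 2) (by positivity)
    refine Hw_union_separated hs hρ0 ?_
    rintro V hV ⟨⟨x, hxV, hxS⟩, ⟨y, hyV, hyT⟩⟩
    have h1 : w (x - y) ≤ ρ := by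
      have := pdiam_le_iff.1 hV x hxV y hyV
      exact (ENNReal.ofReal_le_ofReal_iff hρ0.le).1 this
    have h2 := hρ _ h1
    have h3 := hdist x hxS y hyT
    linarith
  have hle : (inferInstance : MeasurableSpace (Pt n)) ≤ m.caratheodory := by
    rw [BorelSpace.measurable_eq (α := Pt n)]
    exact hmetric.borel_le_caratheodory
  exact ⟨m.toMeasure hle, fun E hE => toMeasure_apply m hle hE⟩

end Metric

section LinAlg
variable {n : ℕ} {A : Matrix (Fin n) (Fin n) ℝ}

lemma mapp_mapp (A B : Matrix (Fin n) (Fin n) ℝ) (x : Pt n) :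
    mapp A (mapp B x) = mapp (A * B) x := by
  simp [mapp, Matrix.toEuclideanLin_apply, Matrix.mulVec_mulVec]

lemma mapp_one (x : Pt n) : mapp (1 : Matrix (Fin n) (Fin n) ℝ) x = x := by
  simp [mapp, Matrix.toEuclideanLin_apply]

lemma continuous_mapp (A : Matrix (Fin n) (Fin n) ℝ) : Continuous (mapp A) :=
  (Matrix.toEuclideanLin A).continuous_of_finiteDimensional

lemma det_ne_zero_of_norm (hAnorm : ∀ x : Pt n, ‖x‖ ≤ ‖mapp A x‖) : A.det ≠ 0 := by
  intro h
  obtain ⟨v, hv0, hv⟩ := Matrix.exists_mulVec_eq_zero_iff.2 h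
  set x : Pt n := (WithLp.equiv 2 (Fin n → ℝ)).symm v with hx
  have hx0 : mapp A x = 0 := by
    simp [mapp, Matrix.toEuclideanLin_apply, hx, hv]
  have h2 := hAnorm x
  rw [hx0, norm_zero] at h2
  have : x = 0 := norm_le_zero_iff.1 h2
  apply hv0
  have := congrArg (WithLp.equiv 2 (Fin n → ℝ)) this
  simpa [hx] using this

lemma mapp_inv_mapp (hdet : A.det ≠ 0) (x : Pt n) : mapp A⁻¹ (mapp A x) = x := by
  rw [mapp_mapp, Matrix.nonsing_inv_mul A (isUnit_iff_ne_zero.2 hdet), mapp_one]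

lemma mapp_mapp_inv (hdet : A.det ≠ 0) (x : Pt n) : mapp A (mapp A⁻¹ x) = x := by
  rw [mapp_mapp, Matrix.mul_nonsing_inv A (isUnit_iff_ne_zero.2 hdet), mapp_one]

/-- `fIFS A d` as a homeomorphism. -/
def fIFSHomeo (A : Matrix (Fin n) (Fin n) ℝ) (hdet : A.det ≠ 0) (d : Pt n) :
    Pt n ≃ₜ Pt n where
  toFun := fIFS A d
  invFun := fun y => mapp A y - d
  left_inv := fun x => by simp [fIFS, mapp_mapp_inv hdet]
  right_inv := fun y => by simp [fIFS, mapp_inv_mapp hdet]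
  continuous_toFun := (continuous_mapp A⁻¹).comp (continuous_id.add continuous_const)
  continuous_invFun := (continuous_mapp A).sub continuous_const

lemma fIFS_sub (d : Pt n) (x y : Pt n) :
    fIFS A d x - fIFS A d y = mapp A⁻¹ (x - y) := by
  simp only [fIFS, mapp, ← map_sub]
  congr 1
  abel

lemma exists_ratio (hn : 0 < n) (hdet : A.det ≠ 0)
    (hAnorm : ∀ x : Pt n, ‖x‖ ≤ ‖mapp A x‖)
    (hAeq : ∀ x : Pt n, ‖x‖ = ‖mapp A x‖ → x = 0) :
    ∃ r : ℝ, 0 ≤ r ∧ r < 1 ∧ ∀ z : Pt n, ‖mapp A⁻¹ z‖ ≤ r * ‖z‖ := by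
  haveI : Nontrivial (Pt n) := by
    refine nontrivial_of_ne (EuclideanSpace.single (⟨0, hn⟩ : Fin n) (1 : ℝ)) 0 ?_
    intro h
    have := congrArg (fun f => ‖f‖) h
    simp [EuclideanSpace.norm_single] at this
  have hcont : Continuous fun x : Pt n => ‖mapp A⁻¹ x‖ := (continuous_mapp A⁻¹).norm
  obtain ⟨x₀, hx₀mem, hx₀max⟩ := (isCompact_sphere (0 : Pt n) 1).exists_isMaxOn
    (NormedSpace.sphere_nonempty.2 zero_le_one) hcont.continuousOn
  have hx₀norm : ‖x₀‖ = 1 := by simpa using hx₀mem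
  set r := ‖mapp A⁻¹ x₀‖ with hrdef
  have hrle : r ≤ 1 := by
    have := hAnorm (mapp A⁻¹ x₀)
    rwa [mapp_mapp_inv hdet, hx₀norm] at this
  have hr1 : r < 1 := by
    rcases lt_or_eq_of_le hrle with h | h
    · exact h
    · exfalso
      have heq : ‖mapp A⁻¹ x₀‖ = ‖mapp A (mapp A⁻¹ x₀)‖ := by
        rw [mapp_mapp_inv hdet, hx₀norm, ← hrdef, h]
      have h0 := hAeq _ heq
      rw [h0, norm_zero] at hrdef
      rw [hrdef] at h
      norm_num at h
  refine ⟨r, norm_nonneg _, hr1, fun z => ?_⟩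
  rcases eq_or_ne z 0 with rfl | hz
  · simp [mapp]
  · have hu : (‖z‖⁻¹ • z) ∈ Metric.sphere (0 : Pt n) 1 := by
      simp [norm_smul, abs_of_nonneg (inv_nonneg.2 (norm_nonneg z)),
        inv_mul_cancel₀ (norm_ne_zero_iff.2 hz)]
    have hle := (isMaxOn_iff.1 hx₀max) _ hu
    have hsm : mapp A⁻¹ (‖z‖⁻¹ • z) = ‖z‖⁻¹ • mapp A⁻¹ z := by
      simp [mapp, _root_.map_smul]
    rw [hsm, norm_smul, norm_inv, norm_norm] at hle
    have hz' : (0 : ℝ) < ‖z‖ := norm_pos_iff.2 hz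
    rw [inv_mul_le_iff₀ hz'] at hle
    linarith [hle]

lemma fWord_cons (d : Pt n) (l : List (Pt n)) (x : Pt n) :
    fWord A (d :: l) x = fIFS A d (fWord A l x) := rfl

lemma fWord_nil (x : Pt n) : fWord A ([] : List (Pt n)) x = x := rfl

lemma fWord_contract {r : ℝ} (hr0 : 0 ≤ r)
    (hr : ∀ z : Pt n, ‖mapp A⁻¹ z‖ ≤ r * ‖z‖) (l : List (Pt n)) (x y : Pt n) :
    ‖fWord A l x - fWord A l y‖ ≤ r ^ l.length * ‖x - y‖ := by
  induction l with
  | nil => simp [fWord_nil]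
  | cons d l ih =>
    rw [fWord_cons, fWord_cons, fIFS_sub]
    calc ‖mapp A⁻¹ (fWord A l x - fWord A l y)‖
        ≤ r * ‖fWord A l x - fWord A l y‖ := hr _
      _ ≤ r * (r ^ l.length * ‖x - y‖) := by
          exact mul_le_mul_of_nonneg_left ih hr0
      _ = r ^ (d :: l).length * ‖x - y‖ := by
          simp [pow_succ]; ring

lemma fWord_continuous (l : List (Pt n)) : Continuous (fWord A l) := by
  induction l with
  | nil => exact continuous_id
  | cons d l ih => exact ((continuous_mapp A⁻¹).comp (continuous_id.add continuous_const)).comp ih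

lemma hasCompactSupport_comp_fIFS (hdet : A.det ≠ 0) {f : Pt n → ℝ}
    (hf : HasCompactSupport f) (d : Pt n) :
    HasCompactSupport (fun x => f (fIFS A d x)) := by
  have himg : IsCompact ((fun y => mapp A y - d) '' tsupport f) :=
    hf.image ((continuous_mapp A).sub continuous_const)
  apply IsCompact.of_isClosed_subset himg (isClosed_tsupport _)
  have h1 : Function.support (fun x => f (fIFS A d x)) ⊆
      (fun y => mapp A y - d) '' tsupport f := by
    intro x hx
    refine ⟨fIFS A d x, subset_tsupport f hx, ?_⟩
    show mapp A (fIFS A d x) - d = x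
    rw [fIFS, mapp_mapp_inv hdet]
    abel
  exact closure_minimal h1 himg.isClosed

lemma hasCompactSupport_comp_fWord (hdet : A.det ≠ 0) {f : Pt n → ℝ}
    (hf : HasCompactSupport f) (l : List (Pt n)) :
    HasCompactSupport (fun x => f (fWord A l x)) := by
  induction l generalizing f with
  | nil => exact hf
  | cons d l ih =>
    have h2 := ih (f := fun y => f (fIFS A d y)) (hasCompactSupport_comp_fIFS hdet hf d)
    exact h2

end LinAlg

section Transport
variable {n : ℕ} {w : Pt n → ℝ} {s : ℝ}

lemma pdiam_image {g : Pt n → Pt n} {c : ℝ} (hc : 0 ≤ c)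
    (hgw : ∀ x y, w (g x - g y) = c * w (x - y)) (U : Set (Pt n)) :
    pdiam w (g '' U) = ENNReal.ofReal c * pdiam w U := by
  calc pdiam w (g '' U)
      = ⨆ x ∈ U, ⨆ y ∈ U, ENNReal.ofReal (w (g x - g y)) := by
        rw [pdiam, iSup_image]
        exact iSup_congr fun x => iSup_congr fun _ => by rw [iSup_image]
    _ = ⨆ x ∈ U, ⨆ y ∈ U, ENNReal.ofReal c * ENNReal.ofReal (w (x - y)) := by
        refine iSup_congr fun x => iSup_congr fun _ =>
          iSup_congr fun y => iSup_congr fun _ => ?_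
        rw [hgw, ENNReal.ofReal_mul hc]
    _ = ENNReal.ofReal c * pdiam w U := by
        rw [pdiam]; simp_rw [ENNReal.mul_iSup]

lemma Hw_image_le (hs : 0 ≤ s) {g : Pt n → Pt n} {c : ℝ} (hc : 0 < c)
    (hgw : ∀ x y, w (g x - g y) = c * w (x - y)) (E : Set (Pt n)) :
    Hw w s (g '' E) ≤ ENNReal.ofReal c ^ s * Hw w s E := by
  have ha0 : (ENNReal.ofReal c ^ s) ≠ 0 :=
    (ENNReal.rpow_pos (ENNReal.ofReal_pos.2 hc) ENNReal.ofReal_ne_top).ne'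
  have hatop : (ENNReal.ofReal c ^ s) ≠ ⊤ :=
    ENNReal.rpow_ne_top_of_nonneg hs ENNReal.ofReal_ne_top
  refine iSup₂_le fun δ hδ => ?_
  have key : preHw w s δ (g '' E) ≤ ENNReal.ofReal c ^ s * preHw w s (δ / c) E := by
    conv_rhs => rw [preHw, ENNReal.mul_iInf_of_ne ha0 hatop]
    refine le_iInf fun U => ?_
    conv_rhs => rw [ENNReal.mul_iInf_of_ne ha0 hatop]
    refine le_iInf fun hcov => ?_
    conv_rhs => rw [ENNReal.mul_iInf_of_ne ha0 hatop]
    refine le_iInf fun hd => ?_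
    refine le_trans (preHw_le_of_cover (fun i => g '' U i) ?_ ?_) ?_
    · rw [← image_iUnion]; exact Set.image_mono hcov
    · intro i
      rw [pdiam_image hc.le hgw]
      calc ENNReal.ofReal c * pdiam w (U i)
          ≤ ENNReal.ofReal c * ENNReal.ofReal (δ / c) := mul_le_mul_right (hd i) _
        _ = ENNReal.ofReal δ := by
            rw [← ENNReal.ofReal_mul hc.le]
            congr 1
            field_simp
    · rw [ENNReal.tsum_mul_left.symm]
      refine ENNReal.tsum_le_tsum fun i => ?_
      rw [pdiam_image hc.le hgw, ENNReal.mul_rpow_of_nonneg _ _ hs]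
  exact key.trans (mul_le_mul_right (le_Hw (by positivity)) _)

lemma Hw_image (hs : 0 ≤ s) {g : Pt n → Pt n} (hbij : Function.Bijective g) {c : ℝ}
    (hc : 0 < c) (hgw : ∀ x y, w (g x - g y) = c * w (x - y)) (E : Set (Pt n)) :
    Hw w s (g '' E) = ENNReal.ofReal c ^ s * Hw w s E := by
  obtain ⟨g', hgl, hgr⟩ := Function.bijective_iff_has_inverse.1 hbij
  have hg'w : ∀ x y, w (g' x - g' y) = c⁻¹ * w (x - y) := by
    intro x y
    have h := hgw (g' x) (g' y)
    rw [hgr x, hgr y] at h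
    rw [h]
    field_simp
  have h1 := Hw_image_le (s := s) hs hc hgw E
  have h2 := Hw_image_le (s := s) hs (inv_pos.2 hc) hg'w (g '' E)
  have himg : g' '' (g '' E) = E := by
    rw [Set.image_image, show (fun x => g' (g x)) = id from funext hgl, image_id]
  rw [himg] at h2
  refine le_antisymm h1 ?_
  calc ENNReal.ofReal c ^ s * Hw w s E
      ≤ ENNReal.ofReal c ^ s * (ENNReal.ofReal c⁻¹ ^ s * Hw w s (g '' E)) :=
        mul_le_mul_right h2 _
    _ = Hw w s (g '' E) := by
        rw [← mul_assoc, ← ENNReal.mul_rpow_of_nonneg _ _ hs,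
          ← ENNReal.ofReal_mul hc.le, mul_inv_cancel₀ hc.ne', ENNReal.ofReal_one,
          ENNReal.one_rpow, one_mul]

end Transport

section Uniqueness
variable {n : ℕ}

lemma measure_eq_of_Cc {τ₁ τ₂ : Measure (Pt n)}
    [IsProbabilityMeasure τ₁] [IsProbabilityMeasure τ₂]
    (h : ∀ f : Pt n → ℝ, Continuous f → HasCompactSupport f →
      ∫ x, f x ∂τ₁ = ∫ x, f x ∂τ₂) : τ₁ = τ₂ := by
  have hcomp : ∀ C : Set (Pt n), IsCompact C → τ₁ C = τ₂ C := by
    intro C hC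
    rcases C.eq_empty_or_nonempty with rfl | hCne
    · simp
    set φ : ℕ → Pt n → ℝ :=
      fun j x => max 0 (1 - (j + 1) * Metric.infDist x C) with hφ
    have hφcont : ∀ j, Continuous (φ j) := fun j =>
      continuous_const.max (continuous_const.sub
        (continuous_const.mul (Metric.continuous_infDist_pt C)))
    have hφsupp : ∀ j, HasCompactSupport (φ j) := by
      intro j
      have hcth : IsCompact (Metric.cthickening 1 C) :=
        hC.cthickening
      apply HasCompactSupport.intro hcth
      intro x hx
      have hd : ¬ Metric.infDist x C ≤ 1 := by
        intro hle
        apply hx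
        rw [Metric.mem_cthickening_iff,
          ENNReal.le_ofReal_iff_toReal_le (Metric.infEdist_ne_top hCne) one_pos.le]
        exact hle
      push_neg at hd
      have : 1 - ((j : ℝ) + 1) * Metric.infDist x C ≤ 0 := by
        have h1 : (0 : ℝ) ≤ (j : ℝ) := Nat.cast_nonneg j
        nlinarith [Metric.infDist_nonneg (x := x) (s := C)]
      simp [hφ, max_eq_left this]
    have hφbd : ∀ j, ∀ x : Pt n, |φ j x| ≤ 1 := by
      intro j x
      rw [abs_le]
      constructor
      · linarith [le_max_left (0:ℝ) (1 - ((j:ℝ) + 1) * Metric.infDist x C)]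
      · apply max_le (by norm_num)
        nlinarith [Metric.infDist_nonneg (x := x) (s := C), Nat.cast_nonneg (α := ℝ) j]
    have hφlim : ∀ x : Pt n, Filter.Tendsto (fun j => φ j x) Filter.atTop
        (nhds (Set.indicator C (fun _ => (1:ℝ)) x)) := by
      intro x
      by_cases hx : x ∈ C
      · have : ∀ j, φ j x = 1 := by
          intro j; simp [hφ, Metric.infDist_zero_of_mem hx]
        rw [Set.indicator_of_mem hx]
        simp only [this]
        exact tendsto_const_nhds
      · have hdpos : 0 < Metric.infDist x C := by
          rcases lt_or_eq_of_le (Metric.infDist_nonneg (x := x) (s := C)) with h | h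
          · exact h
          · exfalso
            exact hx ((hC.isClosed.mem_iff_infDist_zero hCne).2 h.symm)
        rw [Set.indicator_of_notMem hx]
        obtain ⟨N, hN⟩ := exists_nat_gt (1 / Metric.infDist x C)
        have hev : ∀ j ≥ N, φ j x = 0 := by
          intro j hj
          have h1 : 1 / Metric.infDist x C < (j : ℝ) + 1 := by
            calc 1 / Metric.infDist x C < (N : ℝ) := hN
              _ ≤ (j : ℝ) := by exact_mod_cast hj
              _ ≤ (j : ℝ) + 1 := by linarith
          have h2 : 1 ≤ ((j : ℝ) + 1) * Metric.infDist x C := by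
            rw [div_lt_iff₀ hdpos] at h1
            nlinarith
          simp [hφ, max_eq_left (by linarith : 1 - ((j:ℝ) + 1) * Metric.infDist x C ≤ 0)]
        apply Filter.Tendsto.congr' _ tendsto_const_nhds
        filter_upwards [Filter.eventually_ge_atTop N] with j hj
        exact (hev j hj).symm
    have hint : ∀ (τ : Measure (Pt n)) [IsProbabilityMeasure τ],
        Filter.Tendsto (fun j => ∫ x, φ j x ∂τ) Filter.atTop (nhds (τ C).toReal) := by
      intro τ hτ
      have := MeasureTheory.tendsto_integral_of_dominated_convergence
        (F := fun j => φ j) (f := Set.indicator C (fun _ => (1:ℝ))) (bound := fun _ => 1)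
        (μ := τ) (fun j => (hφcont j).aestronglyMeasurable)
        (integrable_const 1)
        (fun j => Filter.Eventually.of_forall fun x => by
          rw [Real.norm_eq_abs]; exact hφbd j x)
        (Filter.Eventually.of_forall hφlim)
      have hind : ∫ x, Set.indicator C (fun _ => (1:ℝ)) x ∂τ = (τ C).toReal := by
        rw [integral_indicator_const (1 : ℝ) hC.measurableSet]
        simp
        rfl
      rwa [hind] at this
    have heq : (τ₁ C).toReal = (τ₂ C).toReal := by
      have hfe : (fun j => ∫ x, φ j x ∂τ₁) = (fun j => ∫ x, φ j x ∂τ₂) := by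
        funext j; exact h (φ j) (hφcont j) (hφsupp j)
      have h2 : Filter.Tendsto (fun j => ∫ x, φ j x ∂τ₁) Filter.atTop
          (nhds (τ₂ C).toReal) := by
        rw [hfe]; exact hint τ₂
      exact tendsto_nhds_unique (hint τ₁) h2
    exact (ENNReal.toReal_eq_toReal_iff' (measure_ne_top _ _) (measure_ne_top _ _)).1 heq
  have hopen : ∀ U : Set (Pt n), IsOpen U → τ₁ U = τ₂ U := by
    have hin₁ : τ₁.InnerRegularWRT IsCompact IsOpen := Measure.Regular.innerRegular
    have hin₂ : τ₂.InnerRegularWRT IsCompact IsOpen := Measure.Regular.innerRegular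
    intro U hU
    apply le_antisymm
    · refine le_of_forall_lt fun b hb => ?_
      obtain ⟨K, hKU, hKc, hK⟩ := hin₁ hU b hb
      exact lt_of_lt_of_le (hcomp K hKc ▸ hK) (measure_mono hKU)
    · refine le_of_forall_lt fun b hb => ?_
      obtain ⟨K, hKU, hKc, hK⟩ := hin₂ hU b hb
      exact lt_of_lt_of_le ((hcomp K hKc).symm ▸ hK) (measure_mono hKU)
  refine ext_of_generate_finite {U : Set (Pt n) | IsOpen U} ?_ isPiSystem_isOpen
    (fun U hU => hopen U hU) (by simp)
  rw [BorelSpace.measurable_eq (α := Pt n)]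
  rfl

end Uniqueness

section Iterate
variable {n : ℕ} {A : Matrix (Fin n) (Fin n) ℝ} {D : Finset (Pt n)}

lemma iterate_invariance {τ : Measure (Pt n)} (hdet : A.det ≠ 0)
    (hP : ∀ f : Pt n → ℝ, Continuous f → HasCompactSupport f →
      ∫ x, f x ∂τ = ((D.card : ℝ))⁻¹ * ∑ d ∈ D, ∫ x, f (fIFS A d x) ∂τ)
    (hD : (D.card : ℝ) ≠ 0) :
    ∀ (m : ℕ) (f : Pt n → ℝ), Continuous f → HasCompactSupport f →
      ∫ x, f x ∂τ = (((D.card : ℝ)) ^ m)⁻¹ *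
        ∑ v : Fin m → {x : Pt n // x ∈ D},
          ∫ x, f (fWord A (List.ofFn fun j => (v j : Pt n)) x) ∂τ := by
  intro m
  induction m with
  | zero =>
    intro f hf hs
    rw [Fintype.sum_unique (fun v : Fin 0 → {x : Pt n // x ∈ D} =>
      ∫ x, f (fWord A (List.ofFn fun j => (v j : Pt n)) x) ∂τ)]
    simp [List.ofFn_zero, fWord_nil]
  | succ m ih =>
    intro f hf hs
    rw [hP f hf hs]
    have hstep : ∀ d ∈ D, ∫ x, f (fIFS A d x) ∂τ = (((D.card : ℝ)) ^ m)⁻¹ *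
        ∑ v : Fin m → {x : Pt n // x ∈ D},
          ∫ x, f (fIFS A d (fWord A (List.ofFn fun j => (v j : Pt n)) x)) ∂τ := by
      intro d _
      exact ih (fun y => f (fIFS A d y))
        (hf.comp ((continuous_mapp A⁻¹).comp (continuous_id.add continuous_const)))
        (hasCompactSupport_comp_fIFS hdet hs d)
    rw [Finset.sum_congr rfl hstep, ← Finset.mul_sum]
    have hre : ∑ v : Fin (m + 1) → {x : Pt n // x ∈ D},
        ∫ x, f (fWord A (List.ofFn fun j => (v j : Pt n)) x) ∂τ
        = ∑ d ∈ D, ∑ v : Fin m → {x : Pt n // x ∈ D},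
          ∫ x, f (fIFS A d (fWord A (List.ofFn fun j => (v j : Pt n)) x)) ∂τ := by
      rw [← Finset.sum_coe_sort D (fun d => ∑ v : Fin m → {x : Pt n // x ∈ D},
          ∫ x, f (fIFS A d (fWord A (List.ofFn fun j => (v j : Pt n)) x)) ∂τ)]
      rw [← Equiv.sum_comp (Fin.consEquiv (fun _ : Fin (m + 1) => {x : Pt n // x ∈ D}))
        (fun v : Fin (m + 1) → {x : Pt n // x ∈ D} =>
          ∫ x, f (fWord A (List.ofFn fun j => (v j : Pt n)) x) ∂τ), Fintype.sum_prod_type]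
      refine Finset.sum_congr rfl fun d _ => Finset.sum_congr rfl fun v _ => ?_
      congr 1
      funext x
      have hl : (List.ofFn fun j => ((Fin.consEquiv
          (fun _ : Fin (m + 1) => {x : Pt n // x ∈ D}) (d, v)) j : Pt n))
          = (d : Pt n) :: List.ofFn (fun j => (v j : Pt n)) := by
        rw [List.ofFn_succ]
        congr 1
      rw [hl, fWord_cons]
    rw [hre, ← mul_assoc]
    congr 1
    rw [pow_succ]
    field_simp
end Iterate

section Compare
variable {n : ℕ} {A : Matrix (Fin n) (Fin n) ℝ} {D : Finset (Pt n)}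

lemma integral_dist_est {τ : Measure (Pt n)} [IsProbabilityMeasure τ]
    {f : Pt n → ℝ} {M ε ε' R : ℝ} (hε : 0 ≤ ε) (hM0 : 0 ≤ M)
    (hM : ∀ x, |f x| ≤ M) {G : Pt n → Pt n}
    (hGint : Integrable (fun x => f (G x)) τ)
    (hGood : ∀ x : Pt n, ‖x‖ ≤ R → |f (G x) - f (G 0)| ≤ ε)
    (htail : (τ {x : Pt n | R < ‖x‖}).toReal ≤ ε') :
    |(∫ x, f (G x) ∂τ) - f (G 0)| ≤ ε + 2 * M * ε' := by
  have hmeas : MeasurableSet {x : Pt n | R < ‖x‖} :=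
    measurableSet_lt measurable_const continuous_norm.measurable
  have hconst : ∫ _x : Pt n, f (G 0) ∂τ = f (G 0) := by simp
  rw [← hconst, ← integral_sub hGint (integrable_const _)]
  set g : Pt n → ℝ :=
    fun x => ε + Set.indicator {x : Pt n | R < ‖x‖} (fun _ => 2 * M) x with hg
  have hgint : Integrable g τ :=
    (integrable_const ε).add ((integrable_const (2 * M)).indicator hmeas)
  have habs : |∫ x, (f (G x) - f (G 0)) ∂τ| ≤ ∫ x, |f (G x) - f (G 0)| ∂τ := by
    simpa [Real.norm_eq_abs] using
      norm_integral_le_integral_norm (μ := τ) (fun x => f (G x) - f (G 0))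
  refine habs.trans (le_trans
    (integral_mono ((hGint.sub (integrable_const _)).abs) hgint ?_) ?_)
  · intro x
    by_cases hR : ‖x‖ ≤ R
    · have h2 : (0:ℝ) ≤ Set.indicator {x : Pt n | R < ‖x‖} (fun _ => 2 * M) x :=
        Set.indicator_nonneg (fun _ _ => by linarith) x
      simp only [hg]
      calc |f (G x) - f (G 0)| ≤ ε := hGood x hR
        _ ≤ ε + _ := le_add_of_nonneg_right h2
    · push_neg at hR
      have h1 : Set.indicator {x : Pt n | R < ‖x‖} (fun _ => 2 * M) x = 2 * M :=
        Set.indicator_of_mem (show x ∈ {x : Pt n | R < ‖x‖} from hR) (fun _ => 2 * M)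
      simp only [hg, h1]
      calc |f (G x) - f (G 0)| = |f (G x) + -(f (G 0))| := by ring_nf
        _ ≤ |f (G x)| + |(-(f (G 0)))| := abs_add_le _ _
        _ = |f (G x)| + |f (G 0)| := by rw [abs_neg]
        _ ≤ M + M := add_le_add (hM _) (hM _)
        _ ≤ ε + 2 * M := by linarith
  · rw [hg]
    rw [integral_add (integrable_const _) ((integrable_const _).indicator hmeas),
      integral_const, integral_indicator_const _ hmeas]
    simp only [measureReal_def, measure_univ, ENNReal.toReal_one, smul_eq_mul, one_smul]
    have h3 : (τ {x : Pt n | R < ‖x‖}).toReal * (2 * M) ≤ 2 * M * ε' := by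
      rw [mul_comm]
      exact mul_le_mul_of_nonneg_left htail (by linarith)
    linarith

lemma invariant_measures_eq (hn : 0 < n) (hdet : A.det ≠ 0)
    (hAnorm : ∀ x : Pt n, ‖x‖ ≤ ‖mapp A x‖)
    (hAeq : ∀ x : Pt n, ‖x‖ = ‖mapp A x‖ → x = 0)
    (hDcard : 0 < D.card)
    {τ₁ τ₂ : Measure (Pt n)} [IsProbabilityMeasure τ₁] [IsProbabilityMeasure τ₂]
    (h₁ : ∀ f : Pt n → ℝ, Continuous f → HasCompactSupport f →
      ∫ x, f x ∂τ₁ = ((D.card : ℝ))⁻¹ * ∑ d ∈ D, ∫ x, f (fIFS A d x) ∂τ₁)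
    (h₂ : ∀ f : Pt n → ℝ, Continuous f → HasCompactSupport f →
      ∫ x, f x ∂τ₂ = ((D.card : ℝ))⁻¹ * ∑ d ∈ D, ∫ x, f (fIFS A d x) ∂τ₂) :
    τ₁ = τ₂ := by
  have hDne : (D.card : ℝ) ≠ 0 := Nat.cast_ne_zero.2 hDcard.ne'
  apply measure_eq_of_Cc
  intro f hf hsupp
  obtain ⟨r, hr0, hr1, hr⟩ := exists_ratio hn hdet hAnorm hAeq
  obtain ⟨M, hM⟩ := hsupp.exists_bound_of_continuous hf
  have hM' : ∀ x, |f x| ≤ M := fun x => by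
    have := hM x; rwa [Real.norm_eq_abs] at this
  have hM0 : 0 ≤ M := le_trans (abs_nonneg _) (hM' 0)
  have hu := hsupp.uniformContinuous_of_continuous hf
  have key : ∀ ε : ℝ, 0 < ε →
      |(∫ x, f x ∂τ₁) - ∫ x, f x ∂τ₂| ≤ (2 + 4 * M) * ε := by
    intro ε hε
    obtain ⟨η, hη0, hηp⟩ := Metric.uniformContinuous_iff.1 hu ε hε
    have htail : ∀ (τ : Measure (Pt n)) (_ : IsProbabilityMeasure τ), ∃ R : ℕ,
        (τ {x : Pt n | (R : ℝ) < ‖x‖}).toReal ≤ ε := by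
      intro τ hτ
      set S : ℕ → Set (Pt n) := fun k => {x : Pt n | (k : ℝ) < ‖x‖} with hS
      have hSm : ∀ k, MeasurableSet (S k) := fun k =>
        measurableSet_lt measurable_const continuous_norm.measurable
      have hSanti : Antitone S := by
        intro k l hkl x hx
        simp only [hS, Set.mem_setOf_eq] at hx ⊢
        exact lt_of_le_of_lt (by exact_mod_cast hkl) hx
      have hSempty : ⋂ k, S k = ∅ := by
        ext x
        simp only [Set.mem_iInter, hS, Set.mem_setOf_eq, Set.mem_empty_iff_false,
          iff_false, not_forall, not_lt]
        obtain ⟨k, hk⟩ := exists_nat_gt ‖x‖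
        exact ⟨k, hk.le⟩
      have hten := tendsto_measure_iInter_atTop
        (fun k => (hSm k).nullMeasurableSet) hSanti ⟨0, measure_ne_top τ _⟩
      rw [hSempty, measure_empty] at hten
      have hten2 : Filter.Tendsto (fun k => (τ (S k)).toReal) Filter.atTop (nhds 0) := by
        have := (ENNReal.tendsto_toReal (by simp : (0:ℝ≥0∞) ≠ ⊤)).comp hten
        simpa [Function.comp_def] using this
      obtain ⟨R, hR⟩ := (hten2.eventually_le_const hε).exists
      exact ⟨R, hR⟩
    obtain ⟨R₁, hR₁⟩ := htail τ₁ inferInstance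
    obtain ⟨R₂, hR₂⟩ := htail τ₂ inferInstance
    set R : ℝ := ((max R₁ R₂ : ℕ) : ℝ) with hRdef
    have hRtail₁ : (τ₁ {x : Pt n | R < ‖x‖}).toReal ≤ ε := by
      refine le_trans (ENNReal.toReal_mono (measure_ne_top _ _) (measure_mono ?_)) hR₁
      intro x hx
      simp only [Set.mem_setOf_eq] at hx ⊢
      refine lt_of_le_of_lt ?_ hx
      rw [hRdef]
      exact_mod_cast le_max_left R₁ R₂
    have hRtail₂ : (τ₂ {x : Pt n | R < ‖x‖}).toReal ≤ ε := by
      refine le_trans (ENNReal.toReal_mono (measure_ne_top _ _) (measure_mono ?_)) hR₂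
      intro x hx
      simp only [Set.mem_setOf_eq] at hx ⊢
      refine lt_of_le_of_lt ?_ hx
      rw [hRdef]
      exact_mod_cast le_max_right R₁ R₂
    have hR0 : 0 ≤ R := by rw [hRdef]; positivity
    obtain ⟨m, hm⟩ : ∃ m : ℕ, r ^ m * (R + 1) < η := by
      have h1 : Filter.Tendsto (fun m : ℕ => r ^ m * (R + 1)) Filter.atTop (nhds 0) := by
        have := tendsto_pow_atTop_nhds_zero_of_lt_one hr0 hr1
        simpa using this.mul_const (R + 1)
      exact (h1.eventually_lt_const hη0).exists
    -- contraction of words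
    have hGood : ∀ (l : List (Pt n)), l.length = m → ∀ x : Pt n, ‖x‖ ≤ R →
        |f (fWord A l x) - f (fWord A l 0)| ≤ ε := by
      intro l hl x hx
      have h1 : ‖fWord A l x - fWord A l 0‖ ≤ r ^ m * ‖x - 0‖ := by
        rw [← hl]; exact fWord_contract hr0 hr l x 0
      rw [sub_zero] at h1
      have h2 : dist (fWord A l x) (fWord A l 0) < η := by
        rw [dist_eq_norm]
        refine lt_of_le_of_lt (h1.trans ?_) hm
        have : r ^ m * ‖x‖ ≤ r ^ m * (R + 1) := by
          refine mul_le_mul_of_nonneg_left (by linarith) (by positivity)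
        linarith
      have := hηp h2
      rw [Real.dist_eq] at this
      exact this.le
    have hit₁ := iterate_invariance hdet h₁ hDne m f hf hsupp
    have hit₂ := iterate_invariance hdet h₂ hDne m f hf hsupp
    let T := {x : Pt n // x ∈ D}
    let G : (Fin m → T) → Pt n → Pt n :=
      fun v => fWord A (List.ofFn fun j => (v j : Pt n))
    have hGint : ∀ (v : Fin m → T) (τ : Measure (Pt n)) [IsFiniteMeasureOnCompacts τ],
        Integrable (fun x => f (G v x)) τ := by
      intro v τ _
      exact Continuous.integrable_of_hasCompactSupport
        (hf.comp (fWord_continuous _)) (hasCompactSupport_comp_fWord hdet hsupp _)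
    have hcard : (Finset.univ : Finset (Fin m → T)).card = D.card ^ m := by
      rw [Finset.card_univ, Fintype.card_fun, Fintype.card_coe, Fintype.card_fin]
    have hperv : ∀ v : Fin m → T,
        |(∫ x, f (G v x) ∂τ₁) - ∫ x, f (G v x) ∂τ₂| ≤ 2 * ε + 4 * M * ε := by
      intro v
      have hlen : (List.ofFn fun j => ((v j : Pt n))).length = m := by
        simp
      have e₁ := integral_dist_est (τ := τ₁) hε.le hM0 hM' (hGint v τ₁)
        (fun x hx => hGood _ hlen x hx) hRtail₁
      have e₂ := integral_dist_est (τ := τ₂) hε.le hM0 hM' (hGint v τ₂)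
        (fun x hx => hGood _ hlen x hx) hRtail₂
      calc |(∫ x, f (G v x) ∂τ₁) - ∫ x, f (G v x) ∂τ₂|
          = |((∫ x, f (G v x) ∂τ₁) - f (G v 0)) -
            ((∫ x, f (G v x) ∂τ₂) - f (G v 0))| := by ring_nf
        _ ≤ |(∫ x, f (G v x) ∂τ₁) - f (G v 0)| +
            |(∫ x, f (G v x) ∂τ₂) - f (G v 0)| := abs_sub _ _
        _ ≤ (ε + 2 * M * ε) + (ε + 2 * M * ε) := add_le_add e₁ e₂
        _ = 2 * ε + 4 * M * ε := by ring
    rw [hit₁, hit₂, ← mul_sub, ← Finset.sum_sub_distrib]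
    rw [abs_mul]
    have hpow : |(((D.card : ℝ)) ^ m)⁻¹| = (((D.card : ℝ)) ^ m)⁻¹ := by
      rw [abs_of_nonneg]; positivity
    rw [hpow]
    have hsum : |∑ v : Fin m → T, ((∫ x, f (G v x) ∂τ₁) - ∫ x, f (G v x) ∂τ₂)|
        ≤ (D.card ^ m : ℝ) * (2 * ε + 4 * M * ε) := by
      refine le_trans (Finset.abs_sum_le_sum_abs _ _) ?_
      refine le_trans (Finset.sum_le_sum fun v _ => hperv v) ?_
      rw [Finset.sum_const, hcard, nsmul_eq_mul]
      push_cast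
      exact le_rfl
    calc (((D.card : ℝ)) ^ m)⁻¹ *
          |∑ v : Fin m → T, ((∫ x, f (G v x) ∂τ₁) - ∫ x, f (G v x) ∂τ₂)|
        ≤ (((D.card : ℝ)) ^ m)⁻¹ * ((D.card ^ m : ℝ) * (2 * ε + 4 * M * ε)) := by
          refine mul_le_mul_of_nonneg_left hsum (by positivity)
      _ = 2 * ε + 4 * M * ε := by
          field_simp
      _ ≤ (2 + 4 * M) * ε := le_of_eq (by ring)
  -- conclude equality
  have habs : |(∫ x, f x ∂τ₁) - ∫ x, f x ∂τ₂| ≤ 0 := by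
    refine _root_.le_of_forall_pos_le_add fun t ht => ?_
    have h2M : (0:ℝ) < 2 + 4 * M := by linarith
    have := key (t / (2 + 4 * M)) (by positivity)
    rw [mul_div_cancel₀ _ h2M.ne'] at this
    linarith
  have h0 : |(∫ x, f x ∂τ₁) - ∫ x, f x ∂τ₂| = 0 :=
    le_antisymm habs (abs_nonneg _)
  have h1 := abs_eq_zero.1 h0
  linarith

end Compare

section Control
variable {n : ℕ}

lemma control_of_comparable {w : Pt n → ℝ} {C α₁ α₂ : ℝ} (hC : 0 < C)
    (hα₁ : 0 < α₁) (hα₂ : 0 < α₂)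
    (hbig : ∀ x : Pt n, 1 < ‖x‖ → C⁻¹ * ‖x‖ ^ α₁ ≤ w x ∧ w x ≤ C * ‖x‖ ^ α₂)
    (hsmall : ∀ x : Pt n, ‖x‖ ≤ 1 → C⁻¹ * ‖x‖ ^ α₂ ≤ w x ∧ w x ≤ C * ‖x‖ ^ α₁) :
    ∀ ε : ℝ, 0 < ε → ∃ δ > 0, ∀ z : Pt n, w z ≤ δ → ‖z‖ ≤ ε := by
  intro ε hε
  set ε' := min ε 1 with hε'def
  have hε' : 0 < ε' := lt_min hε one_pos
  have hε'le1 : ε' ≤ 1 := min_le_right _ _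
  refine ⟨C⁻¹ * ε' ^ α₂ / 2, by positivity, fun z hz => ?_⟩
  have hεα : ε' ^ α₂ ≤ 1 := Real.rpow_le_one hε'.le hε'le1 hα₂.le
  have hεαpos : 0 < ε' ^ α₂ := Real.rpow_pos_of_pos hε' _
  have hC' : (0:ℝ) < C⁻¹ := inv_pos.2 hC
  have hz1 : ‖z‖ ≤ 1 := by
    by_contra hgt; push_neg at hgt
    have h1 := (hbig z hgt).1
    have h2 : (1:ℝ) ≤ ‖z‖ ^ α₁ := Real.one_le_rpow hgt.le hα₁.le
    nlinarith
  have h1 := (hsmall z hz1).1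
  have h2 : ‖z‖ ^ α₂ < ε' ^ α₂ := by nlinarith
  have h3 : ‖z‖ < ε' := by
    by_contra hc; push_neg at hc
    have := Real.rpow_le_rpow hε'.le hc hα₂.le
    linarith
  exact le_trans h3.le (min_le_left _ _)

end Control

/-- Lemma 3.2: if `0 < ℋ^s_w(K) < ∞` then the invariant measure `σ` is the
normalized restriction of `ℋ^s_w` to `K`. -/
theorem stmt6 {n : ℕ} (hn : 0 < n) (A : Matrix (Fin n) (Fin n) ℝ)
    (hA : IsExpandingMatrix A)
    (hAnorm : ∀ x : Pt n, ‖x‖ ≤ ‖mapp A x‖)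
    (hAeq : ∀ x : Pt n, ‖x‖ = ‖mapp A x‖ → x = 0)
    (w : Pt n → ℝ) (hw : IsPseudoNorm A w)
    (D : Finset (Pt n)) (hD0 : (0 : Pt n) ∈ D)
    (K : Set (Pt n)) (hK : IsSelfAffineSet A D K)
    (s : ℝ) (hs : s = n * Real.log D.card / Real.log |A.det|)
    (hpos : 0 < Hw w s K) (hfin : Hw w s K < ⊤)
    (σ : Measure (Pt n)) (hσ : IsInvariantMeasure A D σ) :
    ∀ E : Set (Pt n), MeasurableSet E → σ E = Hw w s (E ∩ K) / Hw w s K := by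
  classical
  intro E hE
  obtain ⟨hKne, hKcomp, hKeq⟩ := hK
  have hspos : 0 < s := by
    by_contra hneg
    push_neg at hneg
    rw [Hw_top_of_nonpos hneg K] at hfin
    exact lt_irrefl _ hfin
  have hdet : A.det ≠ 0 := det_ne_zero_of_norm hAnorm
  have hq : (0:ℝ) < |A.det| := abs_pos.2 hdet
  have hN : 0 < D.card := Finset.card_pos.2 ⟨0, hD0⟩
  have hNR : (0:ℝ) < (D.card : ℝ) := by exact_mod_cast hN
  have hNE : ((D.card : ℕ) : ℝ≥0∞) ≠ 0 := by exact_mod_cast hN.ne'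
  have hNT : ((D.card : ℕ) : ℝ≥0∞) ≠ ⊤ := ENNReal.natCast_ne_top _
  have hnR : ((n : ℝ)) ≠ 0 := Nat.cast_ne_zero.2 hn.ne'
  have hlogq : Real.log |A.det| ≠ 0 := by
    intro h
    rw [h] at hs
    simp at hs
    rw [hs] at hspos
    exact lt_irrefl _ hspos
  have hlogq' : Real.log A.det ≠ 0 := by rwa [Real.log_abs] at hlogq
  have hsl : s * Real.log A.det = (n : ℝ) * Real.log (D.card : ℝ) := by
    rw [hs, Real.log_abs]
    field_simp
  set Q : ℝ := |A.det| ^ ((1:ℝ)/(n:ℝ)) with hQdef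
  have hQpos : 0 < Q := Real.rpow_pos_of_pos hq _
  have hQs : Q ^ s = (D.card : ℝ) := by
    rw [hQdef, ← Real.rpow_mul hq.le, Real.rpow_def_of_pos hq]
    have h2 : Real.log |A.det| * ((1:ℝ)/(n:ℝ) * s) = Real.log (D.card : ℝ) := by
      rw [Real.log_abs]
      field_simp
      nlinarith [hsl]
    rw [h2, Real.exp_log hNR]
  have hconstant : ENNReal.ofReal Q⁻¹ ^ s = (((D.card : ℕ)) : ℝ≥0∞)⁻¹ := by
    rw [ENNReal.ofReal_rpow_of_pos (inv_pos.2 hQpos), Real.inv_rpow hQpos.le, hQs,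
      ENNReal.ofReal_inv_of_pos hNR, ENNReal.ofReal_natCast]
  obtain ⟨C, hC, α₁, hα₁, α₂, hα₂, hbig, hsmall⟩ := hw.comparable
  obtain ⟨μ, hμ⟩ := exists_measure_Hw hspos (control_of_comparable hC hα₁ hα₂ hbig hsmall)
  have hKmeas : MeasurableSet K := hKcomp.isClosed.measurableSet
  have hfdcont : ∀ d : Pt n, Continuous (fIFS A d) := fun d =>
    (continuous_mapp A⁻¹).comp (continuous_id.add continuous_const)
  have hwinv : ∀ z : Pt n, w (mapp A⁻¹ z) = Q⁻¹ * w z := by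
    intro z
    have h := hw.scaling (mapp A⁻¹ z)
    rw [mapp_mapp_inv hdet] at h
    rw [← hQdef] at h
    rw [h]
    field_simp
  have hfd_scale : ∀ (d : Pt n) (x y : Pt n),
      w (fIFS A d x - fIFS A d y) = Q⁻¹ * w (x - y) := by
    intro d x y; rw [fIFS_sub, hwinv]
  have hfd_bij : ∀ d : Pt n, Function.Bijective (fIFS A d) := fun d =>
    (fIFSHomeo A hdet d).bijective
  have hHwfd : ∀ (d : Pt n) (X : Set (Pt n)),
      Hw w s (fIFS A d '' X) = (((D.card : ℕ)) : ℝ≥0∞)⁻¹ * Hw w s X := by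
    intro d X
    rw [Hw_image hspos.le (hfd_bij d) (inv_pos.2 hQpos) (hfd_scale d) X, hconstant]
  have hKdecomp : K = ⋃ d ∈ D, fIFS A d '' K := by
    have h1 := congrArg (Set.image (mapp A⁻¹)) hKeq
    rw [show mapp A⁻¹ '' (mapp A '' K) = K by
      rw [Set.image_image]; simp [mapp_inv_mapp hdet]] at h1
    conv_lhs => rw [h1]
    simp only [Set.image_iUnion]
    refine Set.iUnion_congr fun d => Set.iUnion_congr fun _ => ?_
    rw [Set.image_image]
    rfl
  have hKdcomp : ∀ d : Pt n, IsCompact (fIFS A d '' K) := fun d => hKcomp.image (hfdcont d)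
  have hKdmeas : ∀ d : Pt n, MeasurableSet (fIFS A d '' K) := fun d =>
    (hKdcomp d).isClosed.measurableSet
  have hμK : μ K = Hw w s K := hμ K hKmeas
  have hμKd : ∀ d : Pt n, μ (fIFS A d '' K) = (((D.card : ℕ)) : ℝ≥0∞)⁻¹ * Hw w s K :=
    fun d => by rw [hμ _ (hKdmeas d), hHwfd]
  have hsumKd : ∑ d ∈ D, μ (fIFS A d '' K) = Hw w s K := by
    rw [Finset.sum_congr rfl (fun d _ => hμKd d), Finset.sum_const, nsmul_eq_mul,
      ← mul_assoc, ENNReal.mul_inv_cancel hNE hNT, one_mul]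
  have hcoverK : μ (⋃ d ∈ D, fIFS A d '' K) = Hw w s K := by rw [← hKdecomp, hμK]
  have hμKfin : μ (⋃ d ∈ D, fIFS A d '' K) ≠ ⊤ := by rw [hcoverK]; exact hfin.ne
  have hnull : ∀ d ∈ D, ∀ d' ∈ D, d ≠ d' →
      μ (fIFS A d '' K ∩ fIFS A d' '' K) = 0 := by
    intro d hd d' hd' hne
    set E2 := (D.erase d).erase d' with hE2
    have hd'e : d' ∈ D.erase d := Finset.mem_erase.2 ⟨hne.symm, hd'⟩
    have hD2 : insert d (insert d' E2) = D := by
      rw [hE2, Finset.insert_erase hd'e, Finset.insert_erase hd]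
    have hdni : d ∉ insert d' E2 := by
      rw [hE2, Finset.insert_erase hd'e]
      exact Finset.notMem_erase d D
    have hd'ni : d' ∉ E2 := Finset.notMem_erase d' _
    have hsum2 : ∑ e ∈ D, μ (fIFS A e '' K)
        = μ (fIFS A d '' K) + (μ (fIFS A d' '' K) + ∑ e ∈ E2, μ (fIFS A e '' K)) := by
      rw [← hD2, Finset.sum_insert hdni, Finset.sum_insert hd'ni]
    have hun : (⋃ e ∈ D, fIFS A e '' K)
        = (fIFS A d '' K ∪ fIFS A d' '' K) ∪ ⋃ e ∈ E2, fIFS A e '' K := by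
      conv_lhs => rw [← hD2]
      rw [Finset.set_biUnion_insert, Finset.set_biUnion_insert, Set.union_assoc]
    have h1 : μ (fIFS A d '' K ∪ fIFS A d' '' K) + μ (fIFS A d '' K ∩ fIFS A d' '' K)
        = μ (fIFS A d '' K) + μ (fIFS A d' '' K) :=
      measure_union_add_inter _ (hKdmeas d')
    have h2 : μ (⋃ e ∈ D, fIFS A e '' K) + μ (fIFS A d '' K ∩ fIFS A d' '' K)
        ≤ μ (⋃ e ∈ D, fIFS A e '' K) + 0 := by
      calc μ (⋃ e ∈ D, fIFS A e '' K) + μ (fIFS A d '' K ∩ fIFS A d' '' K)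
          ≤ (μ (fIFS A d '' K ∪ fIFS A d' '' K) + μ (⋃ e ∈ E2, fIFS A e '' K))
            + μ (fIFS A d '' K ∩ fIFS A d' '' K) := by
            gcongr
            rw [hun]
            exact measure_union_le _ _
        _ = (μ (fIFS A d '' K) + μ (fIFS A d' '' K)) + μ (⋃ e ∈ E2, fIFS A e '' K) := by
            rw [← h1]; ring
        _ ≤ (μ (fIFS A d '' K) + μ (fIFS A d' '' K)) + ∑ e ∈ E2, μ (fIFS A e '' K) := by
            gcongr
            exact measure_biUnion_finset_le _ _
        _ = ∑ e ∈ D, μ (fIFS A e '' K) := by rw [hsum2]; ring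
        _ = μ (⋃ e ∈ D, fIFS A e '' K) := by rw [hsumKd, ← hcoverK]
        _ = μ (⋃ e ∈ D, fIFS A e '' K) + 0 := (add_zero _).symm
    exact le_antisymm (ENNReal.le_of_add_le_add_left hμKfin h2) zero_le
  have hμdecomp : ∀ F : Set (Pt n), MeasurableSet F →
      μ (F ∩ K) = ∑ d ∈ D, μ (F ∩ fIFS A d '' K) := by
    intro F hF
    have h1 : F ∩ K = ⋃ d ∈ D, (F ∩ fIFS A d '' K) := by
      conv_lhs => rw [hKdecomp]
      rw [Set.inter_iUnion₂]
    have hpw : (↑D : Set (Pt n)).Pairwise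
        (Function.onFun (MeasureTheory.AEDisjoint μ) fun d => F ∩ fIFS A d '' K) := by
      intro d hd d' hd' hne
      refine measure_mono_null ?_
        (hnull d (Finset.mem_coe.1 hd) d' (Finset.mem_coe.1 hd') hne)
      intro x hx
      exact ⟨hx.1.2, hx.2.2⟩
    rw [h1]
    exact measure_biUnion_finset₀ hpw (fun d _ => (hF.inter (hKdmeas d)).nullMeasurableSet)
  set H0 := Hw w s K with hH0
  have hH0ne : H0 ≠ 0 := hpos.ne'
  have hH0top : H0 ≠ ⊤ := hfin.ne
  set ν : Measure (Pt n) := H0⁻¹ • μ.restrict K with hνdef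
  have hν_apply : ∀ F : Set (Pt n), MeasurableSet F → ν F = Hw w s (F ∩ K) / H0 := by
    intro F hF
    rw [hνdef, Measure.smul_apply, Measure.restrict_apply hF, smul_eq_mul,
      hμ _ (hF.inter hKmeas), ENNReal.div_eq_inv_mul]
  haveI hνprob : IsProbabilityMeasure ν := by
    constructor
    rw [hνdef, Measure.smul_apply, Measure.restrict_apply_univ, smul_eq_mul, hμK,
      ENNReal.inv_mul_cancel hH0ne hH0top]
  have hmeq : ν = (((D.card : ℕ)) : ℝ≥0∞)⁻¹ • ∑ d ∈ D, Measure.map (fIFS A d) ν := by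
    refine Measure.ext fun F hF => ?_
    simp only [Measure.smul_apply, Measure.finset_sum_apply, smul_eq_mul]
    have hterm : ∀ d ∈ D, Measure.map (fIFS A d) ν F = ν (fIFS A d ⁻¹' F) := fun d _ =>
      Measure.map_apply (hfdcont d).measurable hF
    rw [Finset.sum_congr rfl hterm]
    have hterm2 : ∀ d ∈ D, ν (fIFS A d ⁻¹' F) = H0⁻¹ * μ (fIFS A d ⁻¹' F ∩ K) := by
      intro d _
      rw [hνdef, Measure.smul_apply, Measure.restrict_apply ((hfdcont d).measurable hF),
        smul_eq_mul]
    have hkey : ∀ d ∈ D, μ (F ∩ fIFS A d '' K) =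
        (((D.card : ℕ)) : ℝ≥0∞)⁻¹ * μ (fIFS A d ⁻¹' F ∩ K) := by
      intro d _
      have him : fIFS A d '' (K ∩ fIFS A d ⁻¹' F) = fIFS A d '' K ∩ F :=
        Set.image_inter_preimage (fIFS A d) K F
      rw [hμ _ (hF.inter (hKdmeas d)), hμ _ (((hfdcont d).measurable hF).inter hKmeas)]
      rw [Set.inter_comm F _, ← him, hHwfd]
      rw [Set.inter_comm K _]
    calc ν F = H0⁻¹ * μ (F ∩ K) := by
          rw [hνdef, Measure.smul_apply, Measure.restrict_apply hF, smul_eq_mul]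
      _ = H0⁻¹ * ∑ d ∈ D, μ (F ∩ fIFS A d '' K) := by rw [hμdecomp F hF]
      _ = H0⁻¹ * ∑ d ∈ D, (((D.card : ℕ)) : ℝ≥0∞)⁻¹ * μ (fIFS A d ⁻¹' F ∩ K) := by
          rw [Finset.sum_congr rfl hkey]
      _ = (((D.card : ℕ)) : ℝ≥0∞)⁻¹ * ∑ d ∈ D, H0⁻¹ * μ (fIFS A d ⁻¹' F ∩ K) := by
          rw [Finset.mul_sum, Finset.mul_sum]
          exact Finset.sum_congr rfl fun d _ => by ring
      _ = (((D.card : ℕ)) : ℝ≥0∞)⁻¹ * ∑ d ∈ D, ν (fIFS A d ⁻¹' F) := by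
          rw [Finset.sum_congr rfl fun d hd => (hterm2 d hd).symm]
  have hνinv : ∀ f : Pt n → ℝ, Continuous f → HasCompactSupport f →
      ∫ x, f x ∂ν = ((D.card : ℝ))⁻¹ * ∑ d ∈ D, ∫ x, f (fIFS A d x) ∂ν := by
    intro f hf hsupp
    have hint : ∀ d ∈ D, Integrable f (Measure.map (fIFS A d) ν) := by
      intro d _
      rw [integrable_map_measure hf.aestronglyMeasurable
        (hfdcont d).measurable.aemeasurable]
      exact Continuous.integrable_of_hasCompactSupport (hf.comp (hfdcont d))
        (hasCompactSupport_comp_fIFS hdet hsupp d)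
    calc ∫ x, f x ∂ν
        = ((((D.card : ℕ)) : ℝ≥0∞)⁻¹).toReal
            • ∫ x, f x ∂(∑ d ∈ D, Measure.map (fIFS A d) ν) := by
          conv_lhs => rw [hmeq]
          rw [integral_smul_measure]
      _ = ((D.card : ℝ))⁻¹ * ∑ d ∈ D, ∫ x, f x ∂(Measure.map (fIFS A d) ν) := by
          rw [integral_finset_sum_measure hint, smul_eq_mul]
          congr 1
          rw [ENNReal.toReal_inv]
          simp
      _ = ((D.card : ℝ))⁻¹ * ∑ d ∈ D, ∫ x, f (fIFS A d x) ∂ν := by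
          congr 1
          refine Finset.sum_congr rfl fun d _ => ?_
          exact integral_map (hfdcont d).measurable.aemeasurable hf.aestronglyMeasurable
  obtain ⟨hσprob, hσinv⟩ := hσ
  haveI := hσprob
  have hfinal : σ = ν := invariant_measures_eq hn hdet hAnorm hAeq hN hσinv hνinv
  rw [hfinal, hν_apply E hE]
end
end

section
/- Let s ≥ 0, let E ⊆ ℝⁿ be ℋ^s_w-measurable with ℋ^s_w(E) < ∞, and let ε > 0. Then there exists ρ > 0, depending only on E and ε, such that for every countable collection of Borel sets {Uᵢ} with 0 < diam_w Uᵢ ≤ ρ for all i, one has ℋ^s_w(E ∩ ⋃ᵢ Uᵢ) < Σᵢ (diam_w Uᵢ)^s + ε. -/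
open MeasureTheory Set ENNReal NNReal

noncomputable section

namespace Stmt8Aux

variable {n : ℕ} (w : Pt n → ℝ)

lemma pdiam_empty : pdiam w (∅ : Set (Pt n)) = 0 := by simp [pdiam]

lemma le_pdiam {V : Set (Pt n)} {x y : Pt n} (hx : x ∈ V) (hy : y ∈ V) :
    ENNReal.ofReal (w (x - y)) ≤ pdiam w V :=
  le_iSup₂_of_le x hx (le_iSup₂_of_le y hy le_rfl)

/-- The gauge function defining `preHw` as an `OuterMeasure.ofFunction`. -/
def mfun (s δ : ℝ) (V : Set (Pt n)) : ℝ≥0∞ :=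
  if pdiam w V ≤ ENNReal.ofReal δ then pdiam w V ^ s else ⊤

lemma mfun_empty {s : ℝ} (hs : 0 < s) (δ : ℝ) : mfun w s δ ∅ = 0 := by
  simp [mfun, pdiam_empty, ENNReal.zero_rpow_of_pos hs]

/-- `preHw` as an outer measure. -/
def OMd {s : ℝ} (hs : 0 < s) (δ : ℝ) : OuterMeasure (Pt n) :=
  OuterMeasure.ofFunction (mfun w s δ) (mfun_empty w hs δ)

lemma OMd_eq {s : ℝ} (hs : 0 < s) (δ : ℝ) (E : Set (Pt n)) :
    OMd w hs δ E = preHw w s δ E := by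
  rw [OMd, OuterMeasure.ofFunction_eq_iInf_mem (mfun w s δ) (mfun_empty w hs δ)
    (P := fun V => pdiam w V ≤ ENNReal.ofReal δ) (fun V hV => if_neg hV)]
  unfold preHw
  apply le_antisymm
  · refine le_iInf fun U => le_iInf fun hcov => le_iInf fun hb => ?_
    refine iInf_le_of_le U (iInf_le_of_le hb (iInf_le_of_le hcov ?_))
    exact le_of_eq (tsum_congr fun i => if_pos (hb i))
  · refine le_iInf fun U => le_iInf fun hb => le_iInf fun hcov => ?_
    refine iInf_le_of_le U (iInf_le_of_le hcov (iInf_le_of_le hb ?_))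
    exact le_of_eq (tsum_congr fun i => (if_pos (hb i)).symm)

/-- `Hw` as an outer measure. -/
def HwOM {s : ℝ} (hs : 0 < s) : OuterMeasure (Pt n) :=
  ⨆ (δ : ℝ) (_ : 0 < δ), OMd w hs δ

lemma HwOM_eq {s : ℝ} (hs : 0 < s) (E : Set (Pt n)) :
    HwOM w hs E = Hw w s E := by
  rw [HwOM, OuterMeasure.iSup_apply]
  unfold Hw
  refine iSup_congr fun δ => ?_
  rw [OuterMeasure.iSup_apply]
  exact iSup_congr fun hδ => OMd_eq w hs δ E

lemma preHw_anti {s δ δ' : ℝ} (h : δ ≤ δ') (E : Set (Pt n)) :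
    preHw w s δ' E ≤ preHw w s δ E := by
  unfold preHw
  refine le_iInf fun U => le_iInf fun hcov => le_iInf fun hb => ?_
  exact iInf_le_of_le U (iInf_le_of_le hcov (iInf_le_of_le
    (fun i => (hb i).trans (ENNReal.ofReal_le_ofReal h)) le_rfl))

lemma preHw_le_Hw {s δ : ℝ} (hδ : 0 < δ) (E : Set (Pt n)) :
    preHw w s δ E ≤ Hw w s E :=
  le_iSup₂_of_le δ hδ le_rfl

/-- Small pseudo norm forces small Euclidean norm. -/
lemma sep (hcomp : ∃ C > (0 : ℝ), ∃ α₁ > (0 : ℝ), ∃ α₂ > (0 : ℝ),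
      (∀ x : Pt n, 1 < ‖x‖ → C⁻¹ * ‖x‖ ^ α₁ ≤ w x ∧ w x ≤ C * ‖x‖ ^ α₂) ∧
      (∀ x : Pt n, ‖x‖ ≤ 1 → C⁻¹ * ‖x‖ ^ α₂ ≤ w x ∧ w x ≤ C * ‖x‖ ^ α₁))
    {r₀ : ℝ} (hr : 0 < r₀) :
    ∃ δ₀ > (0 : ℝ), ∀ z : Pt n, w z ≤ δ₀ → ‖z‖ < r₀ := by
  obtain ⟨C, hC, α₁, hα₁, α₂, hα₂, h₁, h₂⟩ := hcomp
  set r₁ := min r₀ 1 with hr₁def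
  have hr₁ : 0 < r₁ := lt_min hr one_pos
  set c := min C⁻¹ (C⁻¹ * r₁ ^ α₂) with hcdef
  have hc : 0 < c :=
    lt_min (inv_pos.mpr hC) (mul_pos (inv_pos.mpr hC) (Real.rpow_pos_of_pos hr₁ _))
  refine ⟨c / 2, by positivity, fun z hz => ?_⟩
  by_contra hge
  push_neg at hge
  have hkey : c ≤ w z := by
    rcases le_or_gt ‖z‖ 1 with hz1 | hz1
    · have h := (h₂ z hz1).1
      have hmin : r₁ ≤ ‖z‖ := le_trans (min_le_left _ _) hge
      have : C⁻¹ * r₁ ^ α₂ ≤ C⁻¹ * ‖z‖ ^ α₂ :=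
        mul_le_mul_of_nonneg_left (Real.rpow_le_rpow hr₁.le hmin hα₂.le)
          (inv_nonneg.mpr hC.le)
      exact le_trans (min_le_right _ _) (this.trans h)
    · have h := (h₁ z hz1).1
      have h1 : (1 : ℝ) ≤ ‖z‖ ^ α₁ := by
        calc (1 : ℝ) = 1 ^ α₁ := (Real.one_rpow _).symm
        _ ≤ ‖z‖ ^ α₁ := Real.rpow_le_rpow zero_le_one hz1.le hα₁.le
      have : C⁻¹ ≤ C⁻¹ * ‖z‖ ^ α₁ := le_mul_of_one_le_right (inv_nonneg.mpr hC.le) h1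
      exact le_trans (min_le_left _ _) (this.trans h)
  linarith

/-- Additivity of `preHw` on `w`-separated sets. -/
lemma preHw_add_le {s : ℝ} (hs : 0 < s) {δ : ℝ} (hδ : 0 < δ) {S T : Set (Pt n)}
    (hsep : ∀ x ∈ S, ∀ y ∈ T, ¬ w (x - y) ≤ δ) :
    preHw w s δ S + preHw w s δ T ≤ preHw w s δ (S ∪ T) := by
  classical
  conv_rhs => rw [preHw]
  refine le_iInf fun U => le_iInf fun hcov => le_iInf fun hb => ?_
  set U₁ : ℕ → Set (Pt n) := fun i => if (U i ∩ S).Nonempty then U i else ∅ with hU₁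
  set U₂ : ℕ → Set (Pt n) := fun i => if (U i ∩ T).Nonempty then U i else ∅ with hU₂
  have hS : preHw w s δ S ≤ ∑' i, pdiam w (U₁ i) ^ s := by
    have cov : S ⊆ ⋃ i, U₁ i := by
      intro x hx
      obtain ⟨i, hi⟩ := mem_iUnion.mp (hcov (Or.inl hx))
      exact mem_iUnion.2 ⟨i, by simp only [hU₁]; rw [if_pos ⟨x, hi, hx⟩]; exact hi⟩
    have bnd : ∀ i, pdiam w (U₁ i) ≤ ENNReal.ofReal δ := by
      intro i
      by_cases h : (U i ∩ S).Nonempty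
      · simpa only [hU₁, if_pos h] using hb i
      · simp [hU₁, if_neg h, pdiam_empty]
    exact iInf_le_of_le U₁ (iInf_le_of_le cov (iInf_le_of_le bnd le_rfl))
  have hT : preHw w s δ T ≤ ∑' i, pdiam w (U₂ i) ^ s := by
    have cov : T ⊆ ⋃ i, U₂ i := by
      intro x hx
      obtain ⟨i, hi⟩ := mem_iUnion.mp (hcov (Or.inr hx))
      exact mem_iUnion.2 ⟨i, by simp only [hU₂]; rw [if_pos ⟨x, hi, hx⟩]; exact hi⟩
    have bnd : ∀ i, pdiam w (U₂ i) ≤ ENNReal.ofReal δ := by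
      intro i
      by_cases h : (U i ∩ T).Nonempty
      · simpa only [hU₂, if_pos h] using hb i
      · simp [hU₂, if_neg h, pdiam_empty]
    exact iInf_le_of_le U₂ (iInf_le_of_le cov (iInf_le_of_le bnd le_rfl))
  calc preHw w s δ S + preHw w s δ T
      ≤ (∑' i, pdiam w (U₁ i) ^ s) + ∑' i, pdiam w (U₂ i) ^ s := add_le_add hS hT
    _ = ∑' i, (pdiam w (U₁ i) ^ s + pdiam w (U₂ i) ^ s) := (ENNReal.tsum_add).symm
    _ ≤ ∑' i, pdiam w (U i) ^ s := by
        refine ENNReal.tsum_le_tsum fun i => ?_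
        by_cases h1 : (U i ∩ S).Nonempty
        · by_cases h2 : (U i ∩ T).Nonempty
          · exfalso
            obtain ⟨x, hxU, hxS⟩ := h1
            obtain ⟨y, hyU, hyT⟩ := h2
            refine hsep x hxS y hyT ?_
            have := (le_pdiam w hxU hyU).trans (hb i)
            exact (ENNReal.ofReal_le_ofReal_iff hδ.le).mp this
          · simp [hU₁, hU₂, if_pos h1, if_neg h2, pdiam_empty,
              ENNReal.zero_rpow_of_pos hs]
        · by_cases h2 : (U i ∩ T).Nonempty
          · simp [hU₁, hU₂, if_neg h1, if_pos h2, pdiam_empty,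
              ENNReal.zero_rpow_of_pos hs]
          · simp [hU₁, hU₂, if_neg h1, if_neg h2, pdiam_empty,
              ENNReal.zero_rpow_of_pos hs]

/-- `HwOM` is a metric outer measure. -/
lemma hwom_isMetric {s : ℝ} (hs : 0 < s)
    (hcomp : ∃ C > (0 : ℝ), ∃ α₁ > (0 : ℝ), ∃ α₂ > (0 : ℝ),
      (∀ x : Pt n, 1 < ‖x‖ → C⁻¹ * ‖x‖ ^ α₁ ≤ w x ∧ w x ≤ C * ‖x‖ ^ α₂) ∧
      (∀ x : Pt n, ‖x‖ ≤ 1 → C⁻¹ * ‖x‖ ^ α₂ ≤ w x ∧ w x ≤ C * ‖x‖ ^ α₁)) :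
    (HwOM w hs).IsMetric := by
  rintro S T ⟨r, hr0, hr⟩
  refine le_antisymm (measure_union_le S T) ?_
  have happ : ∀ X : Set (Pt n),
      HwOM w hs X = ⨆ (δ : ℝ) (_ : 0 < δ), preHw w s δ X := fun X => HwOM_eq w hs X
  rw [happ, happ, happ]
  refine ENNReal.biSup_add_biSup_le' (p := fun δ : ℝ => 0 < δ) (q := fun δ : ℝ => 0 < δ)
    ⟨1, one_pos⟩ ⟨1, one_pos⟩ fun δ₁ h₁ δ₂ h₂ => ?_
  set r' := min r 1 with hr'def
  have hr'0 : r' ≠ 0 := (lt_min (pos_iff_ne_zero.mpr hr0) one_pos).ne'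
  have hr't : r' ≠ ⊤ := ne_top_of_le_ne_top one_ne_top (min_le_right _ _)
  set r₀ := r'.toReal with hr₀def
  have hr₀ : 0 < r₀ := ENNReal.toReal_pos hr'0 hr't
  obtain ⟨δ₀, hδ₀, hsep⟩ := sep w hcomp hr₀
  set δ := min (min δ₁ δ₂) δ₀ with hδdef
  have hδ : 0 < δ := lt_min (lt_min h₁ h₂) hδ₀
  have hw_sep : ∀ x ∈ S, ∀ y ∈ T, ¬ w (x - y) ≤ δ := by
    intro x hx y hy hle
    have hlt : ‖x - y‖ < r₀ := hsep _ (hle.trans (min_le_right _ _))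
    have hedist : edist x y < r' := by
      rw [edist_dist, dist_eq_norm, ← ENNReal.ofReal_toReal hr't]
      exact (ENNReal.ofReal_lt_ofReal_iff hr₀).mpr hlt
    exact absurd (hr x hx y hy) (not_le.mpr (hedist.trans_le (min_le_left _ _)))
  calc preHw w s δ₁ S + preHw w s δ₂ T
      ≤ preHw w s δ S + preHw w s δ T :=
        add_le_add (preHw_anti w ((min_le_left _ _).trans (min_le_left _ _)) S)
          (preHw_anti w ((min_le_left _ _).trans (min_le_right _ _)) T)
    _ ≤ preHw w s δ (S ∪ T) := preHw_add_le w hs hδ hw_sep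
    _ ≤ ⨆ (δ : ℝ) (_ : 0 < δ), preHw w s δ (S ∪ T) := le_iSup₂_of_le δ hδ le_rfl

/-- For `s = 0`, `Hw` is infinite on every set. -/
lemma Hw_zero_top (E : Set (Pt n)) : Hw w 0 E = ⊤ := by
  have h1 : preHw w 0 1 E = ⊤ := by
    rw [preHw, eq_top_iff]
    refine le_iInf fun U => le_iInf fun _ => le_iInf fun _ => ?_
    have : ∀ i : ℕ, pdiam w (U i) ^ (0 : ℝ) = 1 := fun i => ENNReal.rpow_zero
    rw [tsum_congr this, ENNReal.tsum_const_eq_top_of_ne_zero one_ne_zero]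
  rw [eq_top_iff, ← h1]
  exact preHw_le_Hw w one_pos E

/-- Merging a cover of `X` with `U` to cover `E ⊆ ⋃ U ∪ X`. -/
lemma preHw_merge {s : ℝ} {ρ : ℝ} (hρ : 0 < ρ) (U : ℕ → Set (Pt n))
    (hb : ∀ i, pdiam w (U i) ≤ ENNReal.ofReal ρ) {E X : Set (Pt n)}
    (hX : E ⊆ (⋃ i, U i) ∪ X) :
    preHw w s ρ E ≤ (∑' i, pdiam w (U i) ^ s) + preHw w s ρ X := by
  classical
  refine ENNReal.le_of_forall_pos_le_add fun η hη hlt => ?_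
  have hXfin : preHw w s ρ X ≠ ⊤ := by
    intro h
    rw [h] at hlt
    simp at hlt
  have hlt' : preHw w s ρ X < preHw w s ρ X + η :=
    ENNReal.lt_add_right hXfin (by exact_mod_cast hη.ne')
  obtain ⟨V, hV⟩ : ∃ V : ℕ → Set (Pt n), (⨅ (_ : X ⊆ ⋃ i, V i)
      (_ : ∀ i, pdiam w (V i) ≤ ENNReal.ofReal ρ), ∑' i, pdiam w (V i) ^ s)
      < preHw w s ρ X + η := by
    have := hlt'
    conv_lhs at this => rw [preHw]
    exact iInf_lt_iff.mp this
  rw [iInf_lt_iff] at hV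
  obtain ⟨hVcov, hV⟩ := hV
  rw [iInf_lt_iff] at hV
  obtain ⟨hVb, hVsum⟩ := hV
  set W : ℕ → Set (Pt n) := fun k => if Even k then U (k / 2) else V (k / 2) with hW
  have hWcov : E ⊆ ⋃ k, W k := by
    intro x hx
    rcases hX hx with hxU | hxX
    · obtain ⟨i, hi⟩ := mem_iUnion.mp hxU
      refine mem_iUnion.2 ⟨2 * i, ?_⟩
      have he : Even (2 * i) := even_two_mul i
      have hdiv : 2 * i / 2 = i := by omega
      simp only [hW, if_pos he, hdiv]
      exact hi
    · obtain ⟨i, hi⟩ := mem_iUnion.mp (hVcov hxX)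
      refine mem_iUnion.2 ⟨2 * i + 1, ?_⟩
      have he : ¬ Even (2 * i + 1) := by simp [Nat.even_add_one, even_two_mul]
      have hdiv : (2 * i + 1) / 2 = i := by omega
      simp only [hW, if_neg he, hdiv]
      exact hi
  have hWb : ∀ k, pdiam w (W k) ≤ ENNReal.ofReal ρ := by
    intro k
    by_cases he : Even k
    · simp only [hW, if_pos he]; exact hb _
    · simp only [hW, if_neg he]; exact hVb _
  have hsum : ∑' k, pdiam w (W k) ^ s
      = (∑' i, pdiam w (U i) ^ s) + ∑' i, pdiam w (V i) ^ s := by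
    rw [← tsum_even_add_odd ENNReal.summable ENNReal.summable]
    congr 1
    · refine tsum_congr fun k => ?_
      have he : Even (2 * k) := even_two_mul k
      have hdiv : 2 * k / 2 = k := by omega
      simp only [hW, if_pos he, hdiv]
    · refine tsum_congr fun k => ?_
      have he : ¬ Even (2 * k + 1) := by simp [Nat.even_add_one, even_two_mul]
      have hdiv : (2 * k + 1) / 2 = k := by omega
      simp only [hW, if_neg he, hdiv]
  have hE : preHw w s ρ E ≤ ∑' k, pdiam w (W k) ^ s := by
    rw [preHw]
    exact iInf_le_of_le W (iInf_le_of_le hWcov (iInf_le_of_le hWb le_rfl))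
  calc preHw w s ρ E ≤ ∑' k, pdiam w (W k) ^ s := hE
    _ = (∑' i, pdiam w (U i) ^ s) + ∑' i, pdiam w (V i) ^ s := hsum
    _ ≤ (∑' i, pdiam w (U i) ^ s) + (preHw w s ρ X + η) :=
        add_le_add le_rfl hVsum.le
    _ = (∑' i, pdiam w (U i) ^ s) + preHw w s ρ X + η := by ring

end Stmt8Aux

/-- Lemma 4.2: for `ℋ^s_w`-measurable `E` of finite measure and `ε > 0` there is
`ρ > 0` such that any countable collection of Borel sets of `w`-diameter at most `ρ`
satisfies `ℋ^s_w(E ∩ ⋃ᵢ Uᵢ) < Σᵢ (diam_w Uᵢ)^s + ε`. -/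
theorem stmt8 {n : ℕ} (hn : 0 < n) (A : Matrix (Fin n) (Fin n) ℝ)
    (hA : IsExpandingMatrix A)
    (hAnorm : ∀ x : Pt n, ‖x‖ ≤ ‖mapp A x‖)
    (hAeq : ∀ x : Pt n, ‖x‖ = ‖mapp A x‖ → x = 0)
    (w : Pt n → ℝ) (hw : IsPseudoNorm A w)
    (s : ℝ) (hs : 0 ≤ s) (E : Set (Pt n))
    (hE : HwMeasurable w s E) (hfin : Hw w s E < ⊤)
    (ε : ℝ) (hε : 0 < ε) :
    ∃ ρ > (0 : ℝ), ∀ U : ℕ → Set (Pt n), (∀ i, MeasurableSet (U i)) →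
      (∀ i, 0 < pdiam w (U i) ∧ pdiam w (U i) ≤ ENNReal.ofReal ρ) →
      Hw w s (E ∩ ⋃ i, U i) < (∑' i, pdiam w (U i) ^ s) + ENNReal.ofReal ε := by
  classical
  rcases hs.lt_or_eq with hs' | hs'
  swap
  · exfalso
    rw [← hs'] at hfin
    exact absurd (Stmt8Aux.Hw_zero_top w E) hfin.ne
  obtain ⟨ρ, hρ, hlt⟩ : ∃ ρ > (0 : ℝ), Hw w s E < preHw w s ρ E + ENNReal.ofReal ε := by
    by_cases h0 : Hw w s E ≤ ENNReal.ofReal (ε / 2)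
    · refine ⟨1, one_pos, ?_⟩
      calc Hw w s E ≤ ENNReal.ofReal (ε / 2) := h0
        _ < ENNReal.ofReal ε := (ENNReal.ofReal_lt_ofReal_iff hε).mpr (by linarith)
        _ ≤ preHw w s 1 E + ENNReal.ofReal ε := le_add_self
    · push_neg at h0
      have hne0 : Hw w s E ≠ 0 := by
        intro h
        rw [h] at h0
        exact absurd h0 (by simp)
      have hεne : ENNReal.ofReal (ε / 2) ≠ 0 := by
        simp only [ne_eq, ENNReal.ofReal_eq_zero, not_le]
        linarith
      have hsub : Hw w s E - ENNReal.ofReal (ε / 2) < Hw w s E :=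
        ENNReal.sub_lt_self hfin.ne hne0 hεne
      obtain ⟨ρ, hρ⟩ := lt_iSup_iff.mp
        (show Hw w s E - ENNReal.ofReal (ε / 2)
          < ⨆ (δ : ℝ) (_ : 0 < δ), preHw w s δ E from hsub)
      obtain ⟨hρpos, hρlt⟩ := lt_iSup_iff.mp hρ
      refine ⟨ρ, hρpos, ?_⟩
      have h1 : Hw w s E < preHw w s ρ E + ENNReal.ofReal (ε / 2) :=
        (ENNReal.sub_lt_iff_lt_right ENNReal.ofReal_ne_top h0.le).mp hρlt
      refine h1.trans_le (add_le_add le_rfl (ENNReal.ofReal_le_ofReal (by linarith)))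
  refine ⟨ρ, hρ, fun U hUmeas hU => ?_⟩
  set B := ⋃ i, U i with hB
  have hBmeas : MeasurableSet B := MeasurableSet.iUnion hUmeas
  have hmetric := Stmt8Aux.hwom_isMetric w hs' hw.comparable
  have hBborel : MeasurableSet[borel (Pt n)] B := by
    rw [← BorelSpace.measurable_eq]
    exact hBmeas
  have hcar : MeasurableSet[(Stmt8Aux.HwOM w hs').caratheodory] B :=
    hmetric.borel_le_caratheodory _ hBborel
  have hsplit := (OuterMeasure.isCaratheodory_iff (Stmt8Aux.HwOM w hs')).mp hcar E
  have hEsplit : Hw w s E = Hw w s (E ∩ B) + Hw w s (E \ B) := by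
    rwa [Stmt8Aux.HwOM_eq, Stmt8Aux.HwOM_eq, Stmt8Aux.HwOM_eq] at hsplit
  have hmerge : preHw w s ρ E ≤ (∑' i, pdiam w (U i) ^ s) + preHw w s ρ (E \ B) := by
    refine Stmt8Aux.preHw_merge w hρ U (fun i => (hU i).2) (fun x hx => ?_)
    by_cases hxB : x ∈ B
    · exact Or.inl hxB
    · exact Or.inr ⟨hx, hxB⟩
  have hbfin : Hw w s (E \ B) ≠ ⊤ := by
    intro h
    rw [hEsplit, h, add_top] at hfin
    exact absurd hfin (lt_irrefl _)
  have hchain : Hw w s (E ∩ B) + Hw w s (E \ B)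
      < ((∑' i, pdiam w (U i) ^ s) + ENNReal.ofReal ε) + Hw w s (E \ B) := by
    calc Hw w s (E ∩ B) + Hw w s (E \ B) = Hw w s E := hEsplit.symm
      _ < preHw w s ρ E + ENNReal.ofReal ε := hlt
      _ ≤ ((∑' i, pdiam w (U i) ^ s) + preHw w s ρ (E \ B)) + ENNReal.ofReal ε :=
          add_le_add hmerge le_rfl
      _ ≤ ((∑' i, pdiam w (U i) ^ s) + Hw w s (E \ B)) + ENNReal.ofReal ε :=
          add_le_add (add_le_add le_rfl (Stmt8Aux.preHw_le_Hw w hρ _)) le_rfl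
      _ = ((∑' i, pdiam w (U i) ^ s) + ENNReal.ofReal ε) + Hw w s (E \ B) := by ring
  exact (ENNReal.add_lt_add_iff_right hbfin).mp hchain
end
end
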